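/- arXiv:2202.11927 — 6 statements merged into one kernel-verified Lean document; each statement's English description precedes it below -/
import Mathlib

section
/- Let G be a finite directed acyclic graph with distinguished vertices s and t such that every vertex and every edge lies on some directed s-t path, and let T be a tracking set for G, i.e., for any two distinct directed s-t paths P₁, P₂ we have T ∩ V(P₁) ≠ T ∩ V(P₂). For a vertex x ∈ V \ {t}, let Z_x be the set of vertices z reachable from x by a directed path avoiding all vertices of (T ∪ {t}) \ {x}. Then no vertex of G is the head of two distinct edges whose tails both lie in Z_x. -/
/-- A directed path from `s` to `t` in the digraph with edge relation `E`,
represented as its list of vertices. -/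
def DiPath {V : Type*} (E : V → V → Prop) (s t : V) (p : List V) : Prop :=
  p.Chain' E ∧ p.Nodup ∧ p.head? = some s ∧ p.getLast? = some t

/-- `T` is a tracking set: any two distinct directed `s`-`t` paths intersect `T`
in distinct subsets. -/
def Tracking {V : Type*} [DecidableEq V] (E : V → V → Prop) (s t : V) (T : Finset V) : Prop :=
  ∀ p q : List V, DiPath E s t p → DiPath E s t q →
    p.toFinset ∩ T = q.toFinset ∩ T → p = q

/-- The digraph with edge relation `E` has no directed cycle. -/
def DiAcyclic {V : Type*} (E : V → V → Prop) : Prop :=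
  ∀ v : V, ¬ Relation.TransGen E v v

/-- `z` is reachable from `x` by a directed path avoiding all vertices of
`(T ∪ {t}) \ {x}`, i.e. `z ∈ Z_x`. -/
def ZReach {V : Type*} [DecidableEq V] (E : V → V → Prop) (T : Finset V) (t x z : V) : Prop :=
  ∃ p : List V, p.Chain' E ∧ p.Nodup ∧ p.head? = some x ∧ p.getLast? = some z ∧
    ∀ v ∈ p, v ∈ T ∪ {t} → v = x

/-- `b` is reachable from `x` by a directed path avoiding all vertices of
`(T ∪ {t}) \ {x, b}`. -/
def BReach {V : Type*} [DecidableEq V] (E : V → V → Prop) (T : Finset V) (t x b : V) : Prop :=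
  ∃ p : List V, p.Chain' E ∧ p.Nodup ∧ p.head? = some x ∧ p.getLast? = some b ∧
    ∀ v ∈ p, v ∈ T ∪ {t} → v = x ∨ v = b

/-- The out-degree of `z`. -/
def outdeg {V : Type*} [Fintype V] (E : V → V → Prop) [DecidableRel E] (z : V) : ℕ :=
  (Finset.univ.filter fun y => E z y).card

/-- The in-degree of `z`. -/
def indeg {V : Type*} [Fintype V] (E : V → V → Prop) [DecidableRel E] (z : V) : ℕ :=
  (Finset.univ.filter fun y => E y z).card

/-- In a DAG, any list that is a chain for `E` is automatically nodup. -/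
theorem chain'_nodup_of_acyclic {V : Type*} {E : V → V → Prop} (h : DiAcyclic E)
    {l : List V} (hc : l.Chain' E) : l.Nodup := by
  have h1 : l.Chain' (Relation.TransGen E) :=
    hc.imp fun _ _ hab => Relation.TransGen.single hab
  have h2 : l.Pairwise (Relation.TransGen E) := List.isChain_iff_pairwise.mp h1
  exact h2.imp fun {a b} hab hEq => by subst hEq; exact h a hab

/-- in a DAG where every vertex and edge lies on a directed `s`-`t` path,
with tracking set `T` and `x ≠ t`, no vertex is the head of two distinct edges whose
tails both lie in `Z_x`. -/
theorem no_two_edges_from_Zx_same_head {V : Type*} [Fintype V] [DecidableEq V]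
    (E : V → V → Prop) (s t : V)
    (hacyc : DiAcyclic E)
    (hvert : ∀ v : V, ∃ p : List V, DiPath E s t p ∧ v ∈ p)
    (hedge : ∀ u v : V, E u v → ∃ p : List V, DiPath E s t p ∧ [u, v] <:+: p)
    (T : Finset V) (hT : Tracking E s t T)
    (x : V) (hx : x ≠ t) :
    ∀ y z z' : V, E z y → E z' y → ZReach E T t x z → ZReach E T t x z' → z = z' := by
  intro y z z' hzy hz'y hz hz'
  obtain ⟨p, hpc, _, hph, hpl, hpT⟩ := hz
  obtain ⟨p', hp'c, _, hp'h, hp'l, hp'T⟩ := hz'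
  -- a path from `s` through `x`
  obtain ⟨Q, ⟨hQc, _, hQh, hQl⟩, hxQ⟩ := hvert x
  obtain ⟨l₁, l₂, hQeq⟩ := List.append_of_mem hxQ
  subst hQeq
  -- a path through the edge `(z, y)`; its suffix from `y` goes to `t`
  obtain ⟨Q', ⟨hQ'c, _, hQ'h, hQ'l⟩, hinf⟩ := hedge z y hzy
  obtain ⟨c, d, hQ'eq⟩ := hinf
  subst hQ'eq
  have hQ'c' : List.Chain' E (c ++ (z :: y :: d)) := by simpa using hQ'c
  have hyd : List.Chain' E (y :: d) := ((List.isChain_append.mp hQ'c').2.1).tail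
  have hydl : (y :: d).getLast? = some t := by
    have : (c ++ [z, y] ++ d).getLast? = (y :: d).getLast? := by
      rw [show c ++ [z, y] ++ d = (c ++ [z]) ++ (y :: d) by simp]
      exact List.getLast?_append_of_ne_nil _ (by simp)
    rw [← this, hQ'l]
  -- chain facts from `Q = l₁ ++ x :: l₂`
  have hQsplit := List.isChain_append.mp hQc
  -- key construction: glue the pieces into an `s`-`t` path
  have key : ∀ (q : List V) (w : V), q.Chain' E → q.head? = some x →
      q.getLast? = some w → E w y → DiPath E s t (l₁ ++ (q ++ (y :: d))) := by
    intro q w hc hh hl hE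
    obtain ⟨q', rfl⟩ : ∃ q', q = x :: q' := by
      cases q with
      | nil => simp at hh
      | cons a q' =>
        have ha : a = x := by simpa using hh
        exact ⟨q', by rw [ha]⟩
    have hchain : (l₁ ++ ((x :: q') ++ (y :: d))).Chain' E := by
      show List.IsChain E _
      rw [List.isChain_append]
      refine ⟨hQsplit.1, ?_, ?_⟩
      · rw [List.isChain_append]
        refine ⟨hc, hyd, ?_⟩
        intro a ha b hb
        rw [hl] at ha
        simp only [List.head?_cons, Option.mem_def, Option.some.injEq] at ha hb
        rw [← ha, ← hb]
        exact hE
      · intro a ha b hb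
        simp only [List.cons_append, List.head?_cons, Option.mem_def,
          Option.some.injEq] at hb
        rw [← hb]
        exact hQsplit.2.2 a ha x (by simp)
    refine ⟨hchain, chain'_nodup_of_acyclic hacyc hchain, ?_, ?_⟩
    · cases l₁ with
      | nil =>
        simp only [List.nil_append, List.cons_append, List.head?_cons] at hQh ⊢
        exact hQh
      | cons a l =>
        simp only [List.cons_append, List.head?_cons] at hQh ⊢
        exact hQh
    · have : (l₁ ++ ((x :: q') ++ (y :: d))).getLast? = (y :: d).getLast? := by
        rw [← List.append_assoc]
        exact List.getLast?_append_of_ne_nil _ (by simp)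
      rw [this, hydl]
  have hx_mem_p : x ∈ p := by
    cases p with
    | nil => simp at hph
    | cons a q => simp only [List.head?_cons, Option.some.injEq] at hph; simp [hph]
  have hx_mem_p' : x ∈ p' := by
    cases p' with
    | nil => simp at hp'h
    | cons a q => simp only [List.head?_cons, Option.some.injEq] at hp'h; simp [hp'h]
  have hDP1 := key p z hpc hph hpl hzy
  have hDP2 := key p' z' hp'c hp'h hp'l hz'y
  -- the two paths have the same intersection with T
  have hint : (l₁ ++ (p ++ (y :: d))).toFinset ∩ T
      = (l₁ ++ (p' ++ (y :: d))).toFinset ∩ T := by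
    ext v
    simp only [Finset.mem_inter, List.mem_toFinset, List.mem_append]
    constructor
    · rintro ⟨hv, hvT⟩
      refine ⟨?_, hvT⟩
      rcases hv with h | h | h
      · exact Or.inl h
      · have : v = x := hpT v h (Finset.mem_union_left _ hvT)
        exact Or.inr (Or.inl (this ▸ hx_mem_p'))
      · exact Or.inr (Or.inr h)
    · rintro ⟨hv, hvT⟩
      refine ⟨?_, hvT⟩
      rcases hv with h | h | h
      · exact Or.inl h
      · have : v = x := hp'T v h (Finset.mem_union_left _ hvT)
        exact Or.inr (Or.inl (this ▸ hx_mem_p))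
      · exact Or.inr (Or.inr h)
  have heq := hT _ _ hDP1 hDP2 hint
  have heq2 : p ++ (y :: d) = p' ++ (y :: d) := List.append_cancel_left heq
  have heq3 : p = p' := List.append_cancel_right heq2
  rw [heq3, hp'l] at hpl
  exact (Option.some.inj hpl).symm
end

section
/- Let G be a finite directed acyclic graph with source s and sink t such that every vertex and edge lies on some directed s-t path, and let T be a tracking set. For x ∈ V \ {t}, let Z_x be the set of vertices reachable from x avoiding (T ∪ {t}) \ {x}, and let B_x be the set of vertices b ∈ T ∪ {t} reachable from x by a directed path avoiding (T ∪ {t}) \ {x, b}. Then ∑_{z ∈ Z_x} (outdeg(z) − 1) ≤ |B_x|. -/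
section Helpers

variable {V : Type*} {E : V → V → Prop}

private lemma mem_of_getLast?' {l : List V} {a : V} (h : l.getLast? = some a) : a ∈ l := by
  obtain ⟨h1, h2⟩ := List.mem_getLast?_eq_getLast (show a ∈ l.getLast? from h)
  exact h2 ▸ List.getLast_mem h1

private lemma mem_of_head?' {l : List V} {a : V} (h : l.head? = some a) : a ∈ l := by
  rw [List.eq_cons_of_mem_head? (show a ∈ l.head? from h)]
  exact List.mem_cons_self

private lemma chainTransGen : ∀ {l : List V} {a b : V},
    List.Chain E a l → b ∈ l → Relation.TransGen E a b := by
  intro l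
  induction l with
  | nil => intro a b _ hb; cases hb
  | cons c l ih =>
    intro a b h hb
    change List.IsChain E (a :: c :: l) at h
    rw [List.chain_cons] at h
    rcases List.mem_cons.mp hb with rfl | hb
    · exact Relation.TransGen.single h.1
    · exact Relation.TransGen.head h.1 (ih h.2 hb)

private lemma chainNodup (hacyc : DiAcyclic E) :
    ∀ {l : List V}, l.Chain' E → l.Nodup := by
  intro l
  induction l with
  | nil => intro _; simp
  | cons a l ih =>
    intro h
    have h' : List.Chain E a l := h
    exact List.nodup_cons.mpr ⟨fun ha => hacyc a (chainTransGen h' ha), ih h.tail⟩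

private lemma glue {p q : List V} {a : V}
    (hp : p.Chain' E) (hq : q.Chain' E)
    (hpl : p.getLast? = some a) (hqh : q.head? = some a) :
    (p ++ q.tail).Chain' E ∧ (p ++ q.tail).head? = p.head? ∧
    (p ++ q.tail).getLast? = q.getLast? ∧ (∀ v, v ∈ p ++ q.tail ↔ v ∈ p ∨ v ∈ q) := by
  have hamem : a ∈ p := mem_of_getLast?' hpl
  have hpne : p ≠ [] := by rintro rfl; simp at hpl
  cases q with
  | nil => simp at hqh
  | cons b q' =>
    have hab : a = b := by have : b = a := by simpa using hqh
                           exact this.symm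
    subst hab
    refine ⟨?_, ?_, ?_, ?_⟩
    · refine List.isChain_append.mpr ⟨hp, hq.tail, ?_⟩
      intro u hu w hw
      rw [hpl] at hu
      obtain rfl : a = u := by simpa using hu
      cases q' with
      | nil => simp at hw
      | cons c r =>
        obtain rfl : c = w := by simpa using hw
        exact (List.isChain_cons_cons.mp hq).1
    · exact List.head?_append_of_ne_nil _ hpne
    · cases q' with
      | nil => simp [hpl]
      | cons c r =>
        rw [List.tail_cons, List.getLast?_append_of_ne_nil _ (by simp),
          List.getLast?_cons_cons]
    · intro v
      simp only [List.mem_append, List.tail_cons, List.mem_cons]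
      constructor
      · rintro (h | h)
        · exact Or.inl h
        · exact Or.inr (Or.inr h)
      · rintro (h | rfl | h)
        · exact Or.inl h
        · exact Or.inl hamem
        · exact Or.inr h

end Helpers

/-- `∑_{z ∈ Z_x} (outdeg z − 1) ≤ |B_x|`. -/
theorem sum_outdeg_Zx_le_Bx {V : Type*} [Fintype V] [DecidableEq V]
    (E : V → V → Prop) [DecidableRel E] (s t : V)
    (hacyc : DiAcyclic E)
    (hsrc : ∀ v : V, ¬ E v s) (hsink : ∀ v : V, ¬ E t v)
    (hvert : ∀ v : V, ∃ p : List V, DiPath E s t p ∧ v ∈ p)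
    (hedge : ∀ u v : V, E u v → ∃ p : List V, DiPath E s t p ∧ [u, v] <:+: p)
    (T : Finset V) (hT : Tracking E s t T)
    (x : V) (hx : x ≠ t)
    (Zx Bx : Finset V)
    (hZx : ∀ z : V, z ∈ Zx ↔ ZReach E T t x z)
    (hBx : ∀ b : V, b ∈ Bx ↔ b ∈ T ∪ {t} ∧ BReach E T t x b) :
    (∑ z ∈ Zx, ((outdeg E z : ℤ) - 1)) ≤ (Bx.card : ℤ) := by
  classical
  -- paths from s to any vertex, and from any vertex to t
  have pre_ex : ∀ v : V, ∃ p : List V, p.Chain' E ∧ p.head? = some s ∧ p.getLast? = some v := by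
    intro v
    obtain ⟨P, hP, hvP⟩ := hvert v
    obtain ⟨l1, l2, rfl⟩ := List.append_of_mem hvP
    refine ⟨l1 ++ [v], hP.1.prefix ⟨l2, by simp⟩, ?_, List.getLast?_concat⟩
    have h1 : ((l1 ++ [v]) ++ l2).head? = (l1 ++ [v]).head? :=
      List.head?_append_of_ne_nil _ (by simp)
    have h2 : (l1 ++ [v]) ++ l2 = l1 ++ v :: l2 := by simp
    rw [← h2] at hP
    rw [← h1]
    exact hP.2.2.1
  have suf_ex : ∀ v : V, ∃ p : List V, p.Chain' E ∧ p.head? = some v ∧ p.getLast? = some t := by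
    intro v
    obtain ⟨P, hP, hvP⟩ := hvert v
    obtain ⟨l1, l2, rfl⟩ := List.append_of_mem hvP
    refine ⟨v :: l2, hP.1.suffix ⟨l1, rfl⟩, rfl, ?_⟩
    have h1 : (l1 ++ v :: l2).getLast? = (v :: l2).getLast? := List.getLast?_append_cons _ _ _
    rw [← h1]
    exact hP.2.2.2
  -- the key claim: distinct vertices of Zx have no common out-neighbour
  have claimH : ∀ y z1 z2 : V, z1 ∈ Zx → z2 ∈ Zx → E z1 y → E z2 y → z1 = z2 := by
    intro y z1 z2 hz1 hz2 he1 he2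
    obtain ⟨p1, hc1, hn1, hh1, hl1, hav1⟩ := (hZx z1).mp hz1
    obtain ⟨p2, hc2, hn2, hh2, hl2, hav2⟩ := (hZx z2).mp hz2
    obtain ⟨pre, hcpre, hhpre, hlpre⟩ := pre_ex x
    obtain ⟨suf, hcsuf, hhsuf, hlsuf⟩ := suf_ex y
    have hxpre : x ∈ pre := mem_of_getLast?' hlpre
    have hysuf : y ∈ suf := mem_of_head?' hhsuf
    -- build the two s-t paths
    have build : ∀ (z : V) (p : List V), E z y → p.Chain' E → p.head? = some x → p.getLast? = some z →
        DiPath E s t ((pre ++ (p.tail ++ [y])) ++ suf.tail) ∧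
        (∀ v, v ∈ (pre ++ (p.tail ++ [y])) ++ suf.tail ↔
          (v ∈ pre ∨ v ∈ p ∨ v = y ∨ v ∈ suf)) := by
      intro z p hzy hc hh hl
      have hzp : z ∈ p := mem_of_getLast?' hl
      have hcm : List.Chain' E [z, y] := List.isChain_cons_cons.mpr ⟨hzy, List.isChain_singleton _⟩
      obtain ⟨hc₁, hh₁, hl₁, hm₁⟩ := glue hc hcm hl rfl
      obtain ⟨hc₂, hh₂, hl₂, hm₂⟩ := glue hcpre hc₁ hlpre (hh₁.trans hh)
      obtain ⟨hc₃, hh₃, hl₃, hm₃⟩ := glue hc₂ hcsuf (hl₂.trans hl₁) hhsuf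
      have htail : ([z, y] : List V).tail = [y] := rfl
      rw [htail] at hc₁ hh₁ hl₁ hm₁ hc₂ hh₂ hl₂ hm₂ hc₃ hh₃ hl₃ hm₃
      have htail2 : (p ++ [y]).tail = p.tail ++ [y] := by
        cases p with
        | nil => simp at hh
        | cons a p' => rfl
      rw [htail2] at hc₂ hh₂ hl₂ hm₂ hc₃ hh₃ hl₃ hm₃
      refine ⟨⟨hc₃, chainNodup hacyc hc₃, ?_, ?_⟩, ?_⟩
      · rw [hh₃, hh₂, hhpre]
      · rw [hl₃, hlsuf]
      · intro v
        rw [hm₃ v, hm₂ v, hm₁ v]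
        simp only [List.mem_cons, List.not_mem_nil, or_false]
        constructor
        · rintro ((h | h | rfl | rfl) | h)
          · exact Or.inl h
          · exact Or.inr (Or.inl h)
          · exact Or.inr (Or.inl hzp)
          · exact Or.inr (Or.inr (Or.inl rfl))
          · exact Or.inr (Or.inr (Or.inr h))
        · rintro (h | h | rfl | h)
          · exact Or.inl (Or.inl h)
          · exact Or.inl (Or.inr (Or.inl h))
          · exact Or.inl (Or.inr (Or.inr (Or.inr rfl)))
          · exact Or.inr h
    obtain ⟨hQ1, hm1⟩ := build z1 p1 he1 hc1 hh1 hl1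
    obtain ⟨hQ2, hm2⟩ := build z2 p2 he2 hc2 hh2 hl2
    have key : ∀ (p : List V), (∀ v ∈ p, v ∈ T ∪ {t} → v = x) → ∀ v, v ∈ T →
        ((v ∈ pre ∨ v ∈ p ∨ v = y ∨ v ∈ suf) ↔ (v ∈ pre ∨ v ∈ suf)) := by
      intro p hav v hvT
      constructor
      · rintro (h | h | rfl | h)
        · exact Or.inl h
        · have := hav v h (Finset.mem_union_left _ hvT)
          subst this
          exact Or.inl hxpre
        · exact Or.inr hysuf
        · exact Or.inr h
      · rintro (h | h)
        · exact Or.inl h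
        · exact Or.inr (Or.inr (Or.inr h))
    have heq := hT _ _ hQ1 hQ2 (by
      ext v
      simp only [Finset.mem_inter, List.mem_toFinset]
      constructor
      · rintro ⟨hv, hvT⟩
        exact ⟨(hm2 v).mpr ((key p2 hav2 v hvT).mpr ((key p1 hav1 v hvT).mp ((hm1 v).mp hv))),
          hvT⟩
      · rintro ⟨hv, hvT⟩
        exact ⟨(hm1 v).mpr ((key p1 hav1 v hvT).mpr ((key p2 hav2 v hvT).mp ((hm2 v).mp hv))),
          hvT⟩)
    have htaileq : p1.tail = p2.tail := by
      have h1 := List.append_cancel_right heq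
      have h2 := List.append_cancel_left h1
      exact List.append_cancel_right h2
    have hp12 : p1 = p2 := by
      rw [List.eq_cons_of_mem_head? (show x ∈ p1.head? from hh1),
        List.eq_cons_of_mem_head? (show x ∈ p2.head? from hh2), htaileq]
    rw [hp12, hl2] at hl1
    exact (Option.some_inj.mp hl1).symm
  -- counting
  set N : V → Finset V := fun z => Finset.univ.filter (E z) with hN
  have hdisj : ∀ z1 ∈ Zx, ∀ z2 ∈ Zx, z1 ≠ z2 → Disjoint (N z1) (N z2) := by
    intro z1 h1 z2 h2 hne
    rw [Finset.disjoint_left]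
    intro y hy1 hy2
    simp only [hN, Finset.mem_filter, Finset.mem_univ, true_and] at hy1 hy2
    exact hne (claimH y z1 z2 h1 h2 hy1 hy2)
  have hsum : ∑ z ∈ Zx, outdeg E z = (Zx.biUnion N).card := (Finset.card_biUnion hdisj).symm
  have hxZ : x ∈ Zx := (hZx x).mpr ⟨[x], List.isChain_singleton _, by simp, rfl, rfl,
    fun v hv _ => by simpa using hv⟩
  have hsub : Zx.biUnion N ⊆ (Zx.erase x) ∪ Bx := by
    intro y hy
    rw [Finset.mem_biUnion] at hy
    obtain ⟨z, hz, hyz⟩ := hy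
    have hEzy : E z y := by simpa [hN] using hyz
    obtain ⟨p, hc, hn, hh, hl, hav⟩ := (hZx z).mp hz
    have hpne : p ≠ [] := by rintro rfl; simp at hh
    have hcy : (p ++ [y]).Chain' E := by
      refine List.isChain_append.mpr ⟨hc, List.isChain_singleton _, ?_⟩
      intro u hu w hw
      rw [hl] at hu
      obtain rfl : z = u := by simpa using hu
      obtain rfl : y = w := by simpa using hw
      exact hEzy
    have hny : (p ++ [y]).Nodup := chainNodup hacyc hcy
    have hhy : (p ++ [y]).head? = some x := by
      rw [List.head?_append_of_ne_nil _ hpne]; exact hh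
    have hly : (p ++ [y]).getLast? = some y := List.getLast?_concat
    have hynotp : y ∉ p := by
      intro hyp
      obtain ⟨-, -, hd⟩ := List.nodup_append'.mp hny
      exact hd hyp (List.mem_singleton.mpr rfl)
    by_cases hyT : y ∈ T ∪ {t}
    · refine Finset.mem_union_right _ ((hBx y).mpr ⟨hyT, p ++ [y], hcy, hny, hhy, hly, ?_⟩)
      intro v hv hvT
      rcases List.mem_append.mp hv with h | h
      · exact Or.inl (hav v h hvT)
      · exact Or.inr (by simpa using h)
    · have hyZ : y ∈ Zx := (hZx y).mpr ⟨p ++ [y], hcy, hny, hhy, hly, ?_⟩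
      · have hyx : y ≠ x := by
          rintro rfl
          exact hynotp (mem_of_head?' hh)
        exact Finset.mem_union_left _ (Finset.mem_erase.mpr ⟨hyx, hyZ⟩)
      · intro v hv hvT
        rcases List.mem_append.mp hv with h | h
        · exact hav v h hvT
        · obtain rfl : v = y := by simpa using h
          exact absurd hvT hyT
  have hcard : ∑ z ∈ Zx, outdeg E z + 1 ≤ Zx.card + Bx.card := by
    have h1 : (Zx.biUnion N).card ≤ ((Zx.erase x) ∪ Bx).card := Finset.card_le_card hsub
    have h2 : ((Zx.erase x) ∪ Bx).card ≤ (Zx.erase x).card + Bx.card := Finset.card_union_le _ _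
    have h3 : (Zx.erase x).card + 1 = Zx.card := Finset.card_erase_add_one hxZ
    omega
  have hc' : ((∑ z ∈ Zx, outdeg E z : ℕ) : ℤ) + 1 ≤ (Zx.card : ℤ) + Bx.card := by
    exact_mod_cast hcard
  have hsum' : ∑ z ∈ Zx, ((outdeg E z : ℤ) - 1)
      = ((∑ z ∈ Zx, outdeg E z : ℕ) : ℤ) - Zx.card := by
    rw [Finset.sum_sub_distrib, Finset.sum_const, nsmul_eq_mul, mul_one]
    push_cast
    ring
  rw [hsum']
  linarith
end

section
/- Let G be a finite directed acyclic graph with source s and sink t such that every vertex and edge lies on some directed s-t path, and let T be a tracking set for G. Then ∑_{z ∈ V(G)} (outdeg(z) − 1) ≤ (|T| + 1)² − 1. -/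
section Helpers
variable {V : Type*} {E : V → V → Prop}

lemma head?_append_of_ne_nil {l l' : List V} (h : l ≠ []) : (l ++ l').head? = l.head? := by
  cases l with
  | nil => exact absurd rfl h
  | cons a t => simp

lemma getLast?_append_of_ne_nil {l l' : List V} (h : l' ≠ []) :
    (l ++ l').getLast? = l'.getLast? := by
  rcases List.eq_nil_or_concat l' with rfl | ⟨m, b, rfl⟩
  · exact absurd rfl h
  · simp only [List.concat_eq_append, ← List.append_assoc, List.getLast?_concat]

lemma decomp_of_getLast? {l : List V} {a : V} (h : l.getLast? = some a) :
    ∃ m, l = m ++ [a] := by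
  rcases List.eq_nil_or_concat l with rfl | ⟨m, b, rfl⟩
  · simp at h
  · simp only [List.concat_eq_append, List.getLast?_concat, Option.some.injEq] at h
    subst h
    exact ⟨m, by simp⟩

lemma cons_of_head? {l : List V} {a : V} (h : l.head? = some a) : l = a :: l.tail := by
  cases l with
  | nil => simp at h
  | cons b t => simp at h; subst h; rfl

lemma reach_of_head : ∀ {p : List V} {x v : V}, p.Chain' E → p.head? = some x → v ∈ p →
    v = x ∨ Relation.TransGen E x v := by
  intro p
  induction p with
  | nil => intro x v _ h; simp at h
  | cons a l ih =>
    intro x v hc hh hv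
    simp only [List.head?_cons, Option.some.injEq] at hh
    subst hh
    rcases List.mem_cons.mp hv with rfl | hv'
    · exact Or.inl rfl
    · cases l with
      | nil => simp at hv'
      | cons b l' =>
        obtain ⟨hab, hcl⟩ := List.isChain_cons_cons.mp hc
        rcases ih hcl rfl hv' with rfl | htg
        · exact Or.inr (Relation.TransGen.single hab)
        · exact Or.inr (Relation.TransGen.head hab htg)

lemma reach_to_last : ∀ {p : List V} {x v : V}, p.Chain' E → p.getLast? = some x → v ∈ p →
    v = x ∨ Relation.TransGen E v x := by
  intro p
  induction p with
  | nil => intro x v _ h; simp at h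
  | cons a l ih =>
    intro x v hc hl hv
    cases l with
    | nil =>
      simp only [List.getLast?_singleton, Option.some.injEq] at hl
      subst hl
      simp only [List.mem_singleton] at hv
      exact Or.inl hv
    | cons b l' =>
      rw [List.getLast?_cons_cons] at hl
      obtain ⟨hab, hcl⟩ := List.isChain_cons_cons.mp hc
      rcases List.mem_cons.mp hv with rfl | hv'
      · rcases ih hcl hl (List.mem_cons_self) with rfl | htg
        · exact Or.inr (Relation.TransGen.single hab)
        · exact Or.inr (Relation.TransGen.head hab htg)
      · exact ih hcl hl hv'

lemma mem_of_infix_pair {r : List V} {b y : V} (h : [b, y] <:+: (y :: r)) : y ∈ r := by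
  rcases List.infix_cons_iff.mp h with hp | hi
  · obtain ⟨u, hu⟩ := hp
    simp only [List.cons_append, List.cons.injEq] at hu
    obtain ⟨rfl, hu2⟩ := hu
    rw [← hu2]; simp
  · exact hi.subset (by simp)

lemma pred_unique : ∀ {p : List V} {a b y : V}, p.Nodup → [a, y] <:+: p → [b, y] <:+: p →
    a = b := by
  intro p
  induction p with
  | nil => intro a b y _ h; simp at h
  | cons v rest ih =>
    intro a b y hnd h1 h2
    rcases List.infix_cons_iff.mp h1 with hp1 | hi1
    · obtain ⟨r, hr⟩ := hp1
      simp only [List.cons_append, List.cons.injEq] at hr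
      obtain ⟨rfl, hr2⟩ := hr
      rcases List.infix_cons_iff.mp h2 with hp2 | hi2
      · obtain ⟨r2, hr2'⟩ := hp2
        simp only [List.cons_append, List.cons.injEq] at hr2'
        exact hr2'.1.symm
      · rw [← hr2] at hi2 hnd
        have := mem_of_infix_pair hi2
        simp only [List.nodup_cons] at hnd
        exact absurd this hnd.2.1
    · rcases List.infix_cons_iff.mp h2 with hp2 | hi2
      · obtain ⟨r2, hr2'⟩ := hp2
        simp only [List.cons_append, List.cons.injEq] at hr2'
        obtain ⟨rfl, hr2⟩ := hr2'
        rw [← hr2] at hi1 hnd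
        have := mem_of_infix_pair hi1
        simp only [List.nodup_cons] at hnd
        exact absurd this hnd.2.1
      · exact ih (List.Nodup.of_cons hnd) hi1 hi2

/-- Glue an `s`–`x` path `A`, an `x`–`z` path `p`, the edge `z → y`, and a
`y`–`t` path `C` into one simple path. -/
lemma build (hacyc : DiAcyclic E)
    {A C p : List V} {x y z : V}
    (hAc : A.Chain' E) (hAnd : A.Nodup) (hAl : A.getLast? = some x)
    (hCc : C.Chain' E) (hCnd : C.Nodup) (hCh : C.head? = some y)
    (hpc : p.Chain' E) (hpnd : p.Nodup) (hph : p.head? = some x) (hpl : p.getLast? = some z)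
    (hE : E z y) (hxy : x ≠ y) :
    (A ++ ((p.tail ++ [y]) ++ C.tail)).Chain' E ∧
    (A ++ ((p.tail ++ [y]) ++ C.tail)).Nodup ∧
    (A ++ ((p.tail ++ [y]) ++ C.tail)).head? = A.head? ∧
    (A ++ ((p.tail ++ [y]) ++ C.tail)).getLast? = C.getLast? ∧
    [z, y] <:+: (A ++ ((p.tail ++ [y]) ++ C.tail)) := by
  set r := p.tail with hr
  set c := C.tail with hc
  have hp' : p = x :: r := cons_of_head? hph
  have hC' : C = y :: c := cons_of_head? hCh
  have hAne : A ≠ [] := by intro h; rw [h] at hAl; simp at hAl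
  have hpne : p ≠ [] := by rw [hp']; simp
  have hCne : C ≠ [] := by rw [hC']; simp
  -- y not in p (else a cycle)
  have hynp : y ∉ p := by
    intro hy
    rcases reach_to_last hpc hpl hy with rfl | htg
    · exact hacyc y (Relation.TransGen.single hE)
    · exact hacyc y (htg.tail hE)
  have hxr : x ∉ r := by
    have := hpnd; rw [hp'] at this; exact (List.nodup_cons.mp this).1
  have hyc : y ∉ c := by
    have := hCnd; rw [hC'] at this; exact (List.nodup_cons.mp this).1
  have htxy : Relation.TransGen E x y := by
    rcases reach_to_last hpc hpl (by rw [hp']; exact List.mem_cons_self) with rfl | h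
    · exact Relation.TransGen.single hE
    · exact h.tail hE
  -- The extended path P := p ++ [y]
  have hPc : (p ++ [y]).Chain' E := by
    refine hpc.append (List.isChain_singleton y) ?_
    intro a ha b hb
    simp only [List.head?_cons, Option.mem_def, Option.some.injEq] at hb
    rw [hpl] at ha
    simp only [Option.mem_def, Option.some.injEq] at ha
    subst ha; subst hb; exact hE
  have hPeq : p ++ [y] = x :: (r ++ [y]) := by rw [hp']; rfl
  have hPl : (p ++ [y]).getLast? = some y := List.getLast?_concat (l := p)
  have hrc : (r ++ [y]).Chain' E := by
    have := hPc; rw [hPeq] at this; exact (List.isChain_cons.mp this).2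
  have hlinkx : ∀ b ∈ (r ++ [y]).head?, E x b := by
    have := hPc; rw [hPeq] at this; exact (List.isChain_cons.mp this).1
  have hccc : c.Chain' E := by
    have := hCc; rw [hC'] at this; exact (List.isChain_cons.mp this).2
  have hlinky : ∀ b ∈ c.head?, E y b := by
    have := hCc; rw [hC'] at this; exact (List.isChain_cons.mp this).1
  have hPnd : (p ++ [y]).Nodup := by
    rw [List.nodup_append']
    exact ⟨hpnd, List.nodup_singleton y, fun a ha hb => by
      simp only [List.mem_singleton] at hb; subst hb; exact hynp ha⟩
  have hrnd : (r ++ [y]).Nodup := by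
    have := hPnd; rw [hPeq] at this; exact (List.nodup_cons.mp this).2
  have hxnM : x ∉ r ++ [y] := by
    simp only [List.mem_append, List.mem_singleton]
    rintro (h | rfl)
    · exact hxr h
    · exact hxy rfl
  -- membership facts
  have memr : ∀ v ∈ r ++ [y], v ∈ p ++ [y] := by
    intro v hv; rw [hPeq]; exact List.mem_cons_of_mem x hv
  have memc : ∀ v ∈ c, v ≠ y ∧ Relation.TransGen E y v := by
    intro v hv
    have hvC : v ∈ C := by rw [hC']; exact List.mem_cons_of_mem y hv
    have hvy : v ≠ y := fun h => hyc (h ▸ hv)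
    rcases reach_of_head hCc hCh hvC with rfl | h
    · exact absurd rfl hvy
    · exact ⟨hvy, h⟩
  -- disjointness
  have disj1 : (r ++ [y]).Disjoint c := by
    intro v hv hvc
    obtain ⟨hvy, hyv⟩ := memc v hvc
    rcases reach_to_last hPc hPl (memr v hv) with rfl | h
    · exact hvy rfl
    · exact hacyc v (h.trans hyv)
  have hMnd : ((r ++ [y]) ++ c).Nodup := by
    rw [List.nodup_append']
    refine ⟨hrnd, ?_, disj1⟩
    have := hCnd; rw [hC'] at this; exact (List.nodup_cons.mp this).2
  have disj2 : A.Disjoint ((r ++ [y]) ++ c) := by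
    intro v hvA hvM
    rcases reach_to_last hAc hAl hvA with rfl | hvx
    · rcases List.mem_append.mp hvM with h | h
      · exact hxnM h
      · exact hacyc v (htxy.trans (memc v h).2)
    · rcases List.mem_append.mp hvM with h | h
      · have hvnex : v ≠ x := by
          intro hveq; subst hveq; exact hxnM h
        rcases reach_of_head hPc (by rw [hPeq]; rfl) (memr v h) with rfl | hxv
        · exact absurd rfl hvnex
        · exact hacyc v (hvx.trans hxv)
      · exact hacyc v ((hvx.trans htxy).trans (memc v h).2)
  have hQnd : (A ++ ((r ++ [y]) ++ c)).Nodup := by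
    rw [List.nodup_append']; exact ⟨hAnd, hMnd, disj2⟩
  -- chain
  have hMc : ((r ++ [y]) ++ c).Chain' E := by
    refine hrc.append hccc ?_
    intro a ha b hb
    rw [List.getLast?_concat] at ha
    simp only [Option.mem_def, Option.some.injEq] at ha
    subst ha; exact hlinky b hb
  have hQc : (A ++ ((r ++ [y]) ++ c)).Chain' E := by
    refine hAc.append hMc ?_
    intro a ha b hb
    rw [hAl] at ha
    simp only [Option.mem_def, Option.some.injEq] at ha
    subst ha
    rw [head?_append_of_ne_nil (by simp)] at hb
    exact hlinkx b hb
  -- head / last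
  have hQh : (A ++ ((r ++ [y]) ++ c)).head? = A.head? := head?_append_of_ne_nil hAne
  have hQl : (A ++ ((r ++ [y]) ++ c)).getLast? = C.getLast? := by
    have heq : A ++ ((r ++ [y]) ++ c) = (A ++ r) ++ C := by
      rw [hC']; simp
    rw [heq, getLast?_append_of_ne_nil hCne]
  -- infix
  obtain ⟨sA, hsA⟩ := decomp_of_getLast? hAl
  obtain ⟨sp, hsp⟩ := decomp_of_getLast? hpl
  have hxrsp : x :: r = sp ++ [z] := by rw [← hp', hsp]
  have hinf : [z, y] <:+: (A ++ ((r ++ [y]) ++ c)) := by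
    refine ⟨sA ++ sp, c, ?_⟩
    have : A ++ ((r ++ [y]) ++ c) = sA ++ ((x :: r) ++ ([y] ++ c)) := by
      rw [hsA]; simp
    rw [this, hxrsp]
    simp
  exact ⟨hQc, hQnd, hQh, hQl, hinf⟩

end Helpers

section Main
variable {V : Type*} [DecidableEq V] {E : V → V → Prop} {s t : V} {T : Finset V}

lemma key_inj (hacyc : DiAcyclic E)
    (hvert : ∀ v : V, ∃ p : List V, DiPath E s t p ∧ v ∈ p)
    (hT : Tracking E s t T)
    {x y z₁ z₂ : V} (h1 : ZReach E T t x z₁) (h2 : ZReach E T t x z₂)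
    (e1 : E z₁ y) (e2 : E z₂ y) : z₁ = z₂ := by
  obtain ⟨p₁, hp1c, hp1nd, hp1h, hp1l, hp1T⟩ := h1
  obtain ⟨p₂, hp2c, hp2nd, hp2h, hp2l, hp2T⟩ := h2
  have hxy : x ≠ y := by
    intro h; subst h
    rcases reach_to_last hp1c hp1l
        (by rw [cons_of_head? hp1h]; exact List.mem_cons_self) with rfl | h
    · exact hacyc _ (Relation.TransGen.single e1)
    · exact hacyc _ (h.tail e1)
  -- a path A from s to x
  obtain ⟨pA, hpA, hxA⟩ := hvert x
  obtain ⟨hpAc, hpAnd, hpAh, hpAl⟩ := hpA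
  obtain ⟨l₁, l₂, hsplitA⟩ := List.append_of_mem hxA
  set A := l₁ ++ [x] with hA
  have hAeq : pA = A ++ l₂ := by rw [hsplitA, hA]; simp
  rw [hAeq] at hpAc hpAnd hpAh
  have hAc : A.Chain' E := (List.isChain_append.mp hpAc).1
  have hAnd : A.Nodup := (List.nodup_append'.mp hpAnd).1
  have hAl : A.getLast? = some x := List.getLast?_concat (l := l₁)
  have hAh : A.head? = some s := by
    rw [head?_append_of_ne_nil (by simp [hA])] at hpAh; exact hpAh
  -- a path C from y to t
  obtain ⟨pC, hpC, hyC⟩ := hvert y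
  obtain ⟨hpCc, hpCnd, hpCh, hpCl⟩ := hpC
  obtain ⟨m₁, m₂, hsplitC⟩ := List.append_of_mem hyC
  set C := y :: m₂ with hC
  rw [hsplitC] at hpCc hpCnd hpCl
  have hCc : C.Chain' E := (List.isChain_append.mp hpCc).2.1
  have hCnd : C.Nodup := (List.nodup_append'.mp hpCnd).2.1
  have hCh : C.head? = some y := rfl
  have hCl : C.getLast? = some t := by
    rw [getLast?_append_of_ne_nil (by simp [hC])] at hpCl; exact hpCl
  obtain ⟨hQ1c, hQ1nd, hQ1h, hQ1l, hQ1inf⟩ :=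
    build hacyc hAc hAnd hAl hCc hCnd hCh hp1c hp1nd hp1h hp1l e1 hxy
  obtain ⟨hQ2c, hQ2nd, hQ2h, hQ2l, hQ2inf⟩ :=
    build hacyc hAc hAnd hAl hCc hCnd hCh hp2c hp2nd hp2h hp2l e2 hxy
  set Q₁ := A ++ ((p₁.tail ++ [y]) ++ C.tail) with hQ1
  set Q₂ := A ++ ((p₂.tail ++ [y]) ++ C.tail) with hQ2
  have hD1 : DiPath E s t Q₁ := ⟨hQ1c, hQ1nd, by rw [hQ1h, hAh], by rw [hQ1l, hCl]⟩
  have hD2 : DiPath E s t Q₂ := ⟨hQ2c, hQ2nd, by rw [hQ2h, hAh], by rw [hQ2l, hCl]⟩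
  have htail : ∀ (p : List V), p.Nodup → p.head? = some x →
      (∀ v ∈ p, v ∈ T ∪ {t} → v = x) → ∀ v ∈ p.tail, v ∉ T := by
    intro p hnd hh hcond v hv hvT
    have hxp : p = x :: p.tail := cons_of_head? hh
    have hxt : x ∉ p.tail := by rw [hxp] at hnd; exact (List.nodup_cons.mp hnd).1
    have hvx : v = x := hcond v (by rw [hxp]; exact List.mem_cons_of_mem _ hv)
      (Finset.mem_union_left _ hvT)
    exact hxt (hvx ▸ hv)
  have ht1 := htail p₁ hp1nd hp1h hp1T
  have ht2 := htail p₂ hp2nd hp2h hp2T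
  have hTeq : Q₁.toFinset ∩ T = Q₂.toFinset ∩ T := by
    ext v
    simp only [Finset.mem_inter, List.mem_toFinset, hQ1, hQ2, List.mem_append,
      List.mem_singleton]
    constructor
    · rintro ⟨h | (h | rfl) | h, hvT⟩
      · exact ⟨Or.inl h, hvT⟩
      · exact absurd hvT (ht1 v h)
      · exact ⟨Or.inr (Or.inl (Or.inr rfl)), hvT⟩
      · exact ⟨Or.inr (Or.inr h), hvT⟩
    · rintro ⟨h | (h | rfl) | h, hvT⟩
      · exact ⟨Or.inl h, hvT⟩
      · exact absurd hvT (ht2 v h)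
      · exact ⟨Or.inr (Or.inl (Or.inr rfl)), hvT⟩
      · exact ⟨Or.inr (Or.inr h), hvT⟩
  have hQQ : Q₁ = Q₂ := hT Q₁ Q₂ hD1 hD2 hTeq
  exact pred_unique hQ1nd hQ1inf (hQQ ▸ hQ2inf)

lemma zreach_refl (x : V) : ZReach E T t x x :=
  ⟨[x], List.isChain_singleton x, List.nodup_singleton x, rfl, rfl,
    fun v hv _ => by simpa using hv⟩

lemma zreach_step (hacyc : DiAcyclic E) {x z y : V}
    (hz : ZReach E T t x z) (hE : E z y) :
    y ≠ x ∧ (y ∈ T ∪ ({t} : Finset V) ∨ ZReach E T t x y) := by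
  obtain ⟨p, hc, hnd, hh, hl, hcond⟩ := hz
  have hynp : y ∉ p := by
    intro hy
    rcases reach_to_last hc hl hy with rfl | h
    · exact hacyc _ (Relation.TransGen.single hE)
    · exact hacyc _ (h.tail hE)
  have hxp : x ∈ p := by rw [cons_of_head? hh]; exact List.mem_cons_self
  refine ⟨fun h => hynp (h ▸ hxp), ?_⟩
  by_cases hyT : y ∈ T ∪ ({t} : Finset V)
  · exact Or.inl hyT
  · refine Or.inr ⟨p ++ [y], ?_, ?_, ?_, List.getLast?_concat (l := p), ?_⟩
    · refine hc.append (List.isChain_singleton y) ?_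
      intro a ha b hb
      simp only [List.head?_cons, Option.mem_def, Option.some.injEq] at hb
      rw [hl] at ha
      simp only [Option.mem_def, Option.some.injEq] at ha
      subst ha; subst hb; exact hE
    · rw [List.nodup_append']
      exact ⟨hnd, List.nodup_singleton y, fun a ha hb => by
        simp only [List.mem_singleton] at hb; subst hb; exact hynp ha⟩
    · rw [head?_append_of_ne_nil (by intro h; rw [h] at hh; simp at hh)]; exact hh
    · intro v hv hvT
      rcases List.mem_append.mp hv with h | h
      · exact hcond v h hvT
      · simp only [List.mem_singleton] at h; subst h; exact absurd hvT hyT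

lemma exists_zreach_aux :
    ∀ (n : ℕ) (q : List V) (w z : V), q.length ≤ n → q.Chain' E → q.Nodup →
      q.head? = some w → q.getLast? = some z → w ∈ insert s T → t ∉ q →
      ∃ x ∈ insert s T, ZReach E T t x z := by
  intro n
  induction n with
  | zero =>
    intro q w z hlen _ _ hh _ _ _
    have : q = [] := List.length_eq_zero_iff.mp (Nat.le_zero.mp hlen)
    subst this; simp at hh
  | succ n ih =>
    intro q w z hlen hc hnd hh hl hw ht
    by_cases hcase : ∀ v ∈ q.tail, v ∉ T
    · refine ⟨w, hw, q, hc, hnd, hh, hl, ?_⟩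
      intro v hv hvT
      have hq : q = w :: q.tail := cons_of_head? hh
      have hvt : v ≠ t := fun h => ht (h ▸ hv)
      have hvT' : v ∈ T := by
        rcases Finset.mem_union.mp hvT with h | h
        · exact h
        · simp only [Finset.mem_singleton] at h; exact absurd h hvt
      have hv2 : v = w ∨ v ∈ q.tail := by rw [hq] at hv; exact List.mem_cons.mp hv
      rcases hv2 with rfl | hv'
      · rfl
      · exact absurd hvT' (hcase v hv')
    · push_neg at hcase
      obtain ⟨v, hvtail, hvT⟩ := hcase
      have hq : q = w :: q.tail := cons_of_head? hh
      obtain ⟨a, b, htl⟩ := List.append_of_mem hvtail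
      have hqeq : q = (w :: a) ++ (v :: b) := by rw [hq, htl]; rfl
      have hlen' : (v :: b).length ≤ n := by
        have h1 : q.length ≤ n + 1 := hlen
        rw [hqeq] at h1
        simp only [List.length_append, List.length_cons] at h1 ⊢
        omega
      refine ih (v :: b) v z hlen' ?_ ?_ rfl ?_ (Finset.mem_insert_of_mem hvT) ?_
      · rw [hqeq] at hc; exact (List.isChain_append.mp hc).2.1
      · rw [hqeq] at hnd; exact (List.nodup_append'.mp hnd).2.1
      · rw [hqeq] at hl
        rw [← getLast?_append_of_ne_nil (l := w :: a) (l' := v :: b) (by simp)]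
        exact hl
      · intro hmem; exact ht (by rw [hqeq]; exact List.mem_append_right _ hmem)

lemma exists_zreach (hacyc : DiAcyclic E)
    {z : V} {p : List V} (hp : DiPath E s t p) (hzp : z ∈ p) (hzt : z ≠ t) :
    ∃ x ∈ insert s T, ZReach E T t x z := by
  obtain ⟨hc, hnd, hh, hl⟩ := hp
  obtain ⟨l₁, l₂, hsplit⟩ := List.append_of_mem hzp
  set q := l₁ ++ [z] with hqdef
  have hpeq : p = q ++ l₂ := by rw [hsplit, hqdef]; simp
  have hqc : q.Chain' E := by rw [hpeq] at hc; exact (List.isChain_append.mp hc).1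
  have hqnd : q.Nodup := by rw [hpeq] at hnd; exact (List.nodup_append'.mp hnd).1
  have hql : q.getLast? = some z := List.getLast?_concat (l := l₁)
  have hqh : q.head? = some s := by
    rw [hpeq, head?_append_of_ne_nil (by simp [hqdef])] at hh; exact hh
  have htq : t ∉ q := by
    intro htq
    rcases reach_to_last hqc hql htq with rfl | h1
    · exact hzt rfl
    · rcases reach_to_last hc hl hzp with rfl | h2
      · exact hzt rfl
      · exact hacyc t (h1.trans h2)
  exact exists_zreach_aux q.length q s z le_rfl hqc hqnd hqh hql
    (Finset.mem_insert_self s T) htq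

omit [DecidableEq V] in
lemma one_le_outdeg [Fintype V] [DecidableRel E] {z : V} {p : List V}
    (hp : DiPath E s t p) (hzp : z ∈ p) (hzt : z ≠ t) : 1 ≤ outdeg E z := by
  obtain ⟨hc, hnd, hh, hl⟩ := hp
  obtain ⟨l₁, l₂, hsplit⟩ := List.append_of_mem hzp
  cases l₂ with
  | nil =>
    rw [hsplit] at hl
    rw [(rfl : l₁ ++ [z] = l₁ ++ [z]), List.getLast?_concat] at hl
    simp only [Option.some.injEq] at hl
    exact absurd hl hzt
  | cons w l₂' =>
    have hE : E z w := by
      rw [hsplit] at hc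
      exact (List.isChain_cons_cons.mp (List.isChain_append.mp hc).2.1).1
    have : w ∈ Finset.univ.filter fun y => E z y :=
      Finset.mem_filter.mpr ⟨Finset.mem_univ w, hE⟩
    exact Finset.card_pos.mpr ⟨w, this⟩

lemma per_x_bound [Fintype V] [DecidableRel E]
    (hacyc : DiAcyclic E)
    (hvert : ∀ v : V, ∃ p : List V, DiPath E s t p ∧ v ∈ p)
    (hT : Tracking E s t T) (x : V) (Z : Finset V)
    (hZmem : ∀ z, z ∈ Z ↔ ZReach E T t x z ∧ z ≠ t) :
    ∑ z ∈ Z, ((outdeg E z : ℤ) - 1) ≤ (T.card : ℤ) := by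
  classical
  set Ex := Finset.univ.filter (fun e : V × V => e.1 ∈ Z ∧ E e.1 e.2) with hEx
  have hfst : ∀ e ∈ Ex, e.1 ∈ Z := by
    intro e he
    exact ((Finset.mem_filter.mp he).2).1
  have hcardA : Ex.card = ∑ z ∈ Z, outdeg E z := by
    rw [Finset.card_eq_sum_card_fiberwise hfst]
    refine Finset.sum_congr rfl ?_
    intro z hz
    show _ = (Finset.univ.filter fun y => E z y).card
    refine Finset.card_bij (fun e _ => e.2) ?_ ?_ ?_
    · intro e he
      obtain ⟨heEx, hez⟩ := Finset.mem_filter.mp he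
      obtain ⟨-, -, hEe⟩ := Finset.mem_filter.mp heEx
      exact Finset.mem_filter.mpr ⟨Finset.mem_univ _, hez ▸ hEe⟩
    · intro e₁ h₁ e₂ h₂ heq
      obtain ⟨-, hez₁⟩ := Finset.mem_filter.mp h₁
      obtain ⟨-, hez₂⟩ := Finset.mem_filter.mp h₂
      exact Prod.ext (hez₁.trans hez₂.symm) heq
    · intro b hb
      obtain ⟨-, hEb⟩ := Finset.mem_filter.mp hb
      exact ⟨(z, b), Finset.mem_filter.mpr
        ⟨Finset.mem_filter.mpr ⟨Finset.mem_univ _, hz, hEb⟩, rfl⟩, rfl⟩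
  have hinj : Set.InjOn Prod.snd (Ex : Set (V × V)) := by
    intro e₁ h₁ e₂ h₂ heq
    simp only [Finset.coe_filter, Set.mem_setOf_eq, hEx, Finset.mem_univ, true_and] at h₁ h₂
    have hz₁ := (hZmem e₁.1).mp h₁.1
    have hz₂ := (hZmem e₂.1).mp h₂.1
    have : e₁.1 = e₂.1 := key_inj hacyc hvert hT hz₁.1 hz₂.1 h₁.2 (heq ▸ h₂.2)
    exact Prod.ext this heq
  have hmaps : ∀ e ∈ Ex, e.2 ∈ (Z ∪ (T ∪ {t})).erase x := by
    intro e he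
    obtain ⟨-, heZ, hEe⟩ := Finset.mem_filter.mp he
    obtain ⟨hzr, -⟩ := (hZmem e.1).mp heZ
    obtain ⟨hne, hcase⟩ := zreach_step hacyc hzr hEe
    refine Finset.mem_erase.mpr ⟨hne, ?_⟩
    rcases hcase with h | h
    · exact Finset.mem_union_right _ h
    · by_cases het : e.2 = t
      · exact Finset.mem_union_right _ (Finset.mem_union_right _ (by simp [het]))
      · exact Finset.mem_union_left _ ((hZmem e.2).mpr ⟨h, het⟩)
  have hxmem : x ∈ Z ∪ (T ∪ {t}) := by
    by_cases hxt : x = t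
    · exact Finset.mem_union_right _ (Finset.mem_union_right _ (by simp [hxt]))
    · exact Finset.mem_union_left _ ((hZmem x).mpr ⟨zreach_refl x, hxt⟩)
  have hcard1 : Ex.card ≤ ((Z ∪ (T ∪ {t})).erase x).card :=
    Finset.card_le_card_of_injOn Prod.snd hmaps hinj
  have hcard2 : ((Z ∪ (T ∪ {t})).erase x).card = (Z ∪ (T ∪ {t})).card - 1 :=
    Finset.card_erase_of_mem hxmem
  have hcard3 : (Z ∪ (T ∪ {t})).card ≤ Z.card + (T.card + 1) :=
    le_trans (Finset.card_union_le _ _)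
      (by
        have := Finset.card_union_le T ({t} : Finset V)
        simp only [Finset.card_singleton] at this
        omega)
  have hcard4 : 1 ≤ (Z ∪ (T ∪ {t})).card := Finset.card_pos.mpr ⟨x, hxmem⟩
  have hcardB : Ex.card ≤ Z.card + T.card := by omega
  have hsum : ∑ z ∈ Z, ((outdeg E z : ℤ) - 1)
      = (Ex.card : ℤ) - Z.card := by
    rw [Finset.sum_sub_distrib, Finset.sum_const, nsmul_eq_mul, mul_one, hcardA,
      Nat.cast_sum]
  rw [hsum]
  have : (Ex.card : ℤ) ≤ (Z.card : ℤ) + (T.card : ℤ) := by exact_mod_cast hcardB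
  linarith

end Main


/-- `∑_{z ∈ V} (outdeg z − 1) ≤ (|T| + 1)² − 1` for a tracking set `T`. -/
theorem sum_outdeg_le_tracking_sq {V : Type*} [Fintype V] [DecidableEq V]
    (E : V → V → Prop) [DecidableRel E] (s t : V)
    (hacyc : DiAcyclic E)
    (hsrc : ∀ v : V, ¬ E v s) (hsink : ∀ v : V, ¬ E t v)
    (hvert : ∀ v : V, ∃ p : List V, DiPath E s t p ∧ v ∈ p)
    (hedge : ∀ u v : V, E u v → ∃ p : List V, DiPath E s t p ∧ [u, v] <:+: p)
    (T : Finset V) (hT : Tracking E s t T) :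
    (∑ z : V, ((outdeg E z : ℤ) - 1)) ≤ ((T.card : ℤ) + 1) ^ 2 - 1 := by
  classical
  have hassign : ∀ z : V, z ≠ t → ∃ x ∈ insert s T, ZReach E T t x z := by
    intro z hz
    obtain ⟨p, hp, hzp⟩ := hvert z
    exact exists_zreach hacyc hp hzp hz
  set f : V → ℤ := fun z => (outdeg E z : ℤ) - 1 with hf
  have houtt : outdeg E t = 0 :=
    Finset.card_eq_zero.mpr (Finset.filter_eq_empty_iff.mpr fun y _ => hsink y)
  set g : V → V := fun z =>
    if h : ∃ x ∈ insert s T, ZReach E T t x z then h.choose else s with hg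
  have hg1 : ∀ z : V, z ≠ t → g z ∈ insert s T ∧ ZReach E T t (g z) z := by
    intro z hz
    have h := hassign z hz
    simp only [hg, dif_pos h]
    exact ⟨h.choose_spec.1, h.choose_spec.2⟩
  have hsplit : (∑ z : V, f z) = f t + ∑ z ∈ Finset.univ.erase t, f z :=
    (Finset.add_sum_erase _ f (Finset.mem_univ t)).symm
  have hft : f t = -1 := by simp [hf, houtt]
  have hfib : ∑ z ∈ Finset.univ.erase t, f z
      = ∑ x ∈ insert s T, ∑ z ∈ (Finset.univ.erase t).filter (fun z => g z = x), f z :=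
    (Finset.sum_fiberwise_of_maps_to
      (fun z hz => (hg1 z (Finset.ne_of_mem_erase hz)).1) f).symm
  have hperx : ∀ x ∈ insert s T,
      ∑ z ∈ (Finset.univ.erase t).filter (fun z => g z = x), f z ≤ (T.card : ℤ) := by
    intro x _
    have hsub : (Finset.univ.erase t).filter (fun z => g z = x)
        ⊆ Finset.univ.filter (fun z => ZReach E T t x z ∧ z ≠ t) := by
      intro z hz
      simp only [Finset.mem_filter, Finset.mem_erase, Finset.mem_univ, true_and, and_true] at hz ⊢
      obtain ⟨hzt, hgz⟩ := hz
      exact ⟨hgz ▸ (hg1 z hzt).2, hzt⟩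
    refine le_trans (Finset.sum_le_sum_of_subset_of_nonneg hsub ?_) ?_
    · intro z hz _
      simp only [Finset.mem_filter, Finset.mem_univ, true_and] at hz
      obtain ⟨p, hp, hzp⟩ := hvert z
      have h1 := one_le_outdeg hp hzp hz.2
      simp only [hf, sub_nonneg]
      exact_mod_cast h1
    · exact per_x_bound hacyc hvert hT x _ (fun z => by
        simp only [Finset.mem_filter, Finset.mem_univ, true_and])
  have hsum2 : ∑ x ∈ insert s T,
      (∑ z ∈ (Finset.univ.erase t).filter (fun z => g z = x), f z)
      ≤ ((insert s T).card : ℤ) * (T.card : ℤ) := by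
    calc ∑ x ∈ insert s T, (∑ z ∈ (Finset.univ.erase t).filter (fun z => g z = x), f z)
        ≤ ∑ _x ∈ insert s T, (T.card : ℤ) := Finset.sum_le_sum hperx
      _ = ((insert s T).card : ℤ) * (T.card : ℤ) := by
          rw [Finset.sum_const, nsmul_eq_mul]
  have hcard : ((insert s T).card : ℤ) ≤ (T.card : ℤ) + 1 := by
    exact_mod_cast Finset.card_insert_le s T
  have hk : (0 : ℤ) ≤ (T.card : ℤ) := Int.natCast_nonneg _
  calc (∑ z : V, f z) = -1 + ∑ z ∈ Finset.univ.erase t, f z := by rw [hsplit, hft]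
    _ ≤ -1 + ((insert s T).card : ℤ) * (T.card : ℤ) := by rw [hfib]; linarith
    _ ≤ -1 + ((T.card : ℤ) + 1) * (T.card : ℤ) := by nlinarith
    _ ≤ ((T.card : ℤ) + 1) ^ 2 - 1 := by nlinarith
end

section
/- Let G be a finite directed acyclic graph with source s and sink t, without parallel edges, and let G' be obtained from G by subdividing a single edge (u,w) into (u,v),(v,w) with a new vertex v. Then G has a tracking set of size at most k if and only if G' has a tracking set of size at most k. -/
namespace SubdivAux

variable {V : Type*}

/-- `l` uses the edge `(u,w)`, i.e. contains `u` immediately followed by `w`. -/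
def Uses (u w : V) (l : List V) : Prop := ∃ A B, l = A ++ u :: w :: B

lemma Uses.mem_left {u w : V} {l : List V} (h : Uses u w l) : u ∈ l := by
  obtain ⟨A, B, rfl⟩ := h; simp
lemma Uses.mem_right {u w : V} {l : List V} (h : Uses u w l) : w ∈ l := by
  obtain ⟨A, B, rfl⟩ := h; simp

lemma uses_cons_iff {u w a b : V} {l : List V} (h : ¬ (a = u ∧ b = w)) :
    Uses u w (a :: b :: l) ↔ Uses u w (b :: l) := by
  constructor
  · rintro ⟨A, B, hAB⟩
    cases A with
    | nil => simp at hAB; exact absurd ⟨hAB.1, hAB.2.1⟩ h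
    | cons c A' =>
      simp only [List.cons_append, List.cons.injEq] at hAB
      exact ⟨A', B, hAB.2⟩
  · rintro ⟨A, B, hAB⟩
    exact ⟨a :: A, B, by simp [hAB]⟩

lemma not_uses_singleton {u w a : V} : ¬ Uses u w [a] := by
  rintro ⟨A, B, hAB⟩
  have := congrArg List.length hAB
  simp at this; omega

lemma not_uses_nil {u w : V} : ¬ Uses u w ([] : List V) := by
  rintro ⟨A, B, hAB⟩
  have := congrArg List.length hAB
  simp at this

/-- reach along a chain -/
lemma tg_head {E : V → V → Prop} {x y : V} :
    ∀ {l : List V}, (x :: l).Chain' E → y ∈ l → Relation.TransGen E x y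
  | [], _, hy => by simp at hy
  | z :: l, hc, hy => by
    rw [List.Chain', List.isChain_cons_cons] at hc
    rcases List.mem_cons.mp hy with rfl | hy'
    · exact Relation.TransGen.single hc.1
    · exact (Relation.TransGen.single hc.1).trans (tg_head hc.2 hy')

lemma tg_split {E : V → V → Prop} {A B : List V} {x y : V}
    (hc : (A ++ x :: B).Chain' E) (hy : y ∈ B) : Relation.TransGen E x y :=
  tg_head ((List.isChain_append.mp hc).2.1) hy

lemma no_cycle {E : V → V → Prop} (hacyc : DiAcyclic E) {x y : V}
    (h1 : Relation.TransGen E x y) (h2 : Relation.TransGen E y x) : False :=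
  hacyc x (h1.trans h2)

lemma split_unique {x : V} : ∀ {A X R Y : List V}, x ∉ A → x ∉ X →
    A ++ x :: R = X ++ x :: Y → A = X ∧ R = Y := by
  intro A
  induction A with
  | nil =>
    intro X R Y _ hX h
    cases X with
    | nil => simpa using h
    | cons c X' =>
      simp only [List.nil_append, List.cons_append, List.cons.injEq] at h
      exact absurd (h.1 ▸ List.mem_cons_self (a := c) (l := X')) (by simpa [h.1] using hX)
  | cons a A' ih =>
    intro X R Y hA hX h
    cases X with
    | nil =>
      simp only [List.cons_append, List.nil_append, List.cons.injEq] at h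
      exact absurd (h.1 ▸ List.mem_cons_self (a := a) (l := A')) (by simpa [h.1] using hA)
    | cons c X' =>
      simp only [List.cons_append, List.cons.injEq] at h
      obtain ⟨h1, h2⟩ := ih (fun hm => hA (List.mem_cons_of_mem _ hm))
        (fun hm => hX (List.mem_cons_of_mem _ hm)) h.2
      exact ⟨by rw [h.1, h1], h2⟩

lemma head?_append_left {l₁ l₂ : List V} (h : l₁ ≠ []) : (l₁ ++ l₂).head? = l₁.head? := by
  cases l₁ with
  | nil => exact absurd rfl h
  | cons a l => simp

lemma getLast?_cons_of_ne_nil {a : V} {l : List V} (h : l ≠ []) :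
    (a :: l).getLast? = l.getLast? := by
  cases l with
  | nil => exact absurd rfl h
  | cons b l' => exact List.getLast?_cons_cons ..

lemma getLast?_append_right {l₁ l₂ : List V} (h : l₂ ≠ []) :
    (l₁ ++ l₂).getLast? = l₂.getLast? := by
  induction l₁ with
  | nil => simp
  | cons a l ih =>
    have hne : l ++ l₂ ≠ [] := by
      intro hh; rcases List.append_eq_nil_iff.mp hh with ⟨-, h2⟩; exact h h2
    rw [List.cons_append, getLast?_cons_of_ne_nil hne, ih]

lemma inter_eq_iff [DecidableEq V] {p q : List V} {T : Finset V} :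
    p.toFinset ∩ T = q.toFinset ∩ T ↔ ∀ z ∈ T, (z ∈ p ↔ z ∈ q) := by
  constructor
  · intro h z hz
    have := Finset.ext_iff.mp h z
    simp only [Finset.mem_inter, List.mem_toFinset, hz, and_true] at this
    exact this
  · intro h
    ext z
    simp only [Finset.mem_inter, List.mem_toFinset]
    constructor
    · rintro ⟨h1, h2⟩; exact ⟨(h z h2).mp h1, h2⟩
    · rintro ⟨h1, h2⟩; exact ⟨(h z h2).mpr h1, h2⟩

end SubdivAux

namespace SubdivAux

variable {V : Type*} [DecidableEq V] {E : V → V → Prop} {s t u w : V}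

lemma tg_to_of_mem_left {A B : List V} {x z : V}
    (hc : (A ++ x :: B).Chain' E) (hz : z ∈ A) : Relation.TransGen E z x := by
  obtain ⟨X, Y, rfl⟩ := List.append_of_mem hz
  have hc' : (X ++ z :: (Y ++ x :: B)).Chain' E := by simpa [List.append_assoc] using hc
  exact tg_split hc' (by simp)

lemma nodup_facts {A B : List V} (h : (A ++ u :: w :: B).Nodup) :
    A.Nodup ∧ B.Nodup ∧ u ∉ A ∧ w ∉ A ∧ u ∉ B ∧ w ∉ B ∧ u ≠ w ∧ A.Disjoint B := by
  rw [List.nodup_append] at h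
  obtain ⟨hA, hcons, hdisj⟩ := h
  simp only [List.nodup_cons, List.mem_cons, not_or] at hcons
  refine ⟨hA, hcons.2.2, ?_, ?_, hcons.1.2, hcons.2.1, hcons.1.1, ?_⟩
  · intro hm; exact hdisj _ hm _ (by simp) rfl
  · intro hm; exact hdisj _ hm _ (by simp) rfl
  · intro a ha hb; exact hdisj a ha a (by simp [hb]) rfl

/-- Wrapper: to track with `insert x S` given the star property, it suffices to rule out
mixed (edge-using vs non-using) pairs. -/
lemma tracking_of_mixed {S : Finset V}
    (hstar : ∀ p q, DiPath E s t p → DiPath E s t q →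
      (∀ z ∈ S, (z ∈ p ↔ z ∈ q)) → (Uses u w p ↔ Uses u w q) → p = q)
    {x : V}
    (hmix : ∀ p q, DiPath E s t p → DiPath E s t q →
      (∀ z ∈ insert x S, (z ∈ p ↔ z ∈ q)) → Uses u w p → ¬ Uses u w q → False) :
    Tracking E s t (insert x S) := by
  intro p q hp hq htr
  rw [inter_eq_iff] at htr
  have hS : ∀ z ∈ S, (z ∈ p ↔ z ∈ q) := fun z hz => htr z (Finset.mem_insert_of_mem hz)
  by_cases hup : Uses u w p <;> by_cases huq : Uses u w q
  · exact hstar p q hp hq hS (iff_of_true hup huq)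
  · exact (hmix p q hp hq htr hup huq).elim
  · exact (hmix q p hq hp (fun z hz => (htr z hz).symm) huq hup).elim
  · exact hstar p q hp hq hS (iff_of_false hup huq)

lemma caseA (hacyc : DiAcyclic E) (huw : E u w) {S : Finset V}
    (hstar : ∀ p q, DiPath E s t p → DiPath E s t q →
      (∀ z ∈ S, (z ∈ p ↔ z ∈ q)) → (Uses u w p ↔ Uses u w q) → p = q)
    {p₀ q₀ : List V} (hp₀ : DiPath E s t p₀) (hq₀ : DiPath E s t q₀)
    (hU : Uses u w p₀) (hNU : ¬ Uses u w q₀)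
    (htr : ∀ z ∈ S, (z ∈ p₀ ↔ z ∈ q₀)) (hu0 : u ∈ q₀) (hw0 : w ∈ q₀) :
    ∃ x : V, Tracking E s t (insert x S) := by
  obtain ⟨A₀, B₀, rfl⟩ := hU
  obtain ⟨A, R, hq0eq⟩ := List.append_of_mem hu0
  subst hq0eq
  have huwne : u ≠ w := by rintro rfl; exact hacyc u (Relation.TransGen.single huw)
  have hwR : w ∈ R := by
    rcases (by simpa using hw0 : w ∈ A ∨ w = u ∨ w ∈ R) with hwA | hwu | h
    · exact (no_cycle hacyc (tg_to_of_mem_left hq₀.1 hwA) (Relation.TransGen.single huw)).elim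
    · exact (huwne hwu.symm).elim
    · exact h
  obtain ⟨M, B, hReq⟩ := List.append_of_mem hwR
  subst hReq
  have hMne : M ≠ [] := by
    rintro rfl
    exact hNU ⟨A, B, by simp⟩
  -- graph-level reachability facts about M
  have htg1 : ∀ m ∈ M, Relation.TransGen E u m := fun m hm =>
    tg_split hq₀.1 (by simp [hm])
  have htg2 : ∀ m ∈ M, Relation.TransGen E m w := by
    intro m hm
    obtain ⟨X, Y, hXY⟩ := List.append_of_mem hm
    have hc' : ((A ++ u :: X) ++ m :: (Y ++ w :: B)).Chain' E := by
      simpa [hXY, List.append_assoc] using hq₀.1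
    exact tg_split hc' (by simp)
  -- M avoids every path that uses the edge (u,w)
  have hMP : ∀ (A' B' : List V), (A' ++ u :: w :: B').Chain' E →
      ∀ m ∈ M, m ∉ A' ++ u :: w :: B' := by
    intro A' B' hc m hm hmem
    rcases (by simpa using hmem : m ∈ A' ∨ m = u ∨ m = w ∨ m ∈ B') with h | rfl | rfl | h
    · exact no_cycle hacyc (tg_to_of_mem_left hc h) (htg1 m hm)
    · exact hacyc m (htg1 m hm)
    · exact hacyc m (htg2 m hm)
    · have hc2 : ((A' ++ [u]) ++ w :: B').Chain' E := by simpa [List.append_assoc] using hc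
      exact no_cycle hacyc (htg2 m hm) (tg_split hc2 h)
  have hMS : ∀ m ∈ M, m ∉ S := by
    intro m hm hmS
    exact hMP A₀ B₀ hp₀.1 m hm ((htr m hmS).mpr (by simp [hm]))
  -- facts about q₀'s structure
  obtain ⟨nA, -, huA, hwA, -, -, -, -⟩ := nodup_facts (u := u) (w := w) hp₀.2.1
  have hq₀n := hq₀.2.1
  rw [List.nodup_append] at hq₀n
  obtain ⟨-, hq₀n2, -⟩ := hq₀n
  rw [List.nodup_cons] at hq₀n2
  have huM : u ∉ M := fun hm => hq₀n2.1 (by simp [hm])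
  have hwM : w ∉ M := by
    have := hq₀n2.2
    rw [List.nodup_append] at this
    exact fun hm => this.2.2 _ hm _ (by simp) rfl
  have hMnodup : M.Nodup := by
    have := hq₀n2.2
    rw [List.nodup_append] at this
    exact this.1
  -- junction facts from q₀'s chain
  have hq₀c := hq₀.1
  rw [List.Chain', List.isChain_append] at hq₀c
  obtain ⟨-, hq₀c2, -⟩ := hq₀c
  rw [List.isChain_cons] at hq₀c2
  have hjM : ∀ y ∈ M.head?, E u y := by
    intro y hy
    exact hq₀c2.1 y (by rwa [head?_append_left hMne])
  have hq₀c3 := hq₀c2.2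
  rw [List.isChain_append] at hq₀c3
  obtain ⟨hMchain, -, hjW⟩ := hq₀c3
  -- the witness
  refine ⟨M.head hMne, tracking_of_mixed hstar ?_⟩
  intro P Q hP hQ htrPQ hUP hNUQ
  obtain ⟨AP, BP, rfl⟩ := hUP
  obtain ⟨nAP, nBP, huAP, hwAP, huBP, hwBP, -, hdisjP⟩ :=
    nodup_facts (u := u) (w := w) hP.2.1
  have hMdisj : ∀ m ∈ M, m ∉ AP ++ u :: w :: BP := hMP AP BP hP.1
  -- chain facts from P
  have hPc := hP.1
  rw [List.Chain', List.isChain_append] at hPc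
  obtain ⟨hAPchain, hPc2, hjP⟩ := hPc
  rw [List.isChain_cons_cons] at hPc2
  obtain ⟨-, hwBPchain⟩ := hPc2
  -- the rerouted path h
  set h : List V := AP ++ u :: (M ++ w :: BP) with hdef
  have hchain : h.Chain' E := by
    rw [hdef, List.Chain', List.isChain_append]
    refine ⟨hAPchain, ?_, ?_⟩
    · rw [List.isChain_cons]
      refine ⟨fun y hy => hjM y (by rwa [head?_append_left hMne] at hy), ?_⟩
      rw [List.isChain_append]
      exact ⟨hMchain, hwBPchain, fun x hx y hy => by
        simp only [List.head?_cons, Option.mem_def, Option.some.injEq] at hy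
        subst hy; exact hjW x hx w rfl⟩
    · intro x hx y hy
      simp only [List.head?_cons, Option.mem_def, Option.some.injEq] at hy
      subst hy; exact hjP x hx u rfl
  have hnodup : h.Nodup := by
    rw [hdef, List.nodup_append, List.nodup_cons, List.nodup_append, List.nodup_cons]
    refine ⟨nAP, ⟨?_, hMnodup, ⟨hwBP, nBP⟩, ?_⟩, ?_⟩
    · simp only [List.mem_append, List.mem_cons, not_or]
      exact ⟨huM, fun h => huwne h, huBP⟩
    · intro m hm _ hmm rfl
      rcases List.mem_cons.mp hmm with h | h
      · exact hwM (h ▸ hm)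
      · exact hMdisj m hm (by simp [h])
    · intro a ha _ hb rfl
      rcases (by simpa using hb : a = u ∨ a ∈ M ∨ a = w ∨ a ∈ BP) with h | h | h | h
      · exact huAP (h ▸ ha)
      · exact hMdisj a h (by simp [ha])
      · exact hwAP (h ▸ ha)
      · exact hdisjP ha h
  have hhead : h.head? = some s := by
    have : h.head? = (AP ++ u :: w :: BP).head? := by
      rw [hdef]; cases AP <;> simp
    rw [this]; exact hP.2.2.1
  have hlast : h.getLast? = some t := by
    have h1 : h.getLast? = (w :: BP).getLast? := by
      rw [hdef, getLast?_append_right (by simp), getLast?_cons_of_ne_nil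
        (by intro hh; rcases List.append_eq_nil_iff.mp hh with ⟨-, h2⟩; simp at h2),
        getLast?_append_right (by simp)]
    have h2 : (AP ++ u :: w :: BP).getLast? = (w :: BP).getLast? := by
      rw [getLast?_append_right (by simp), List.getLast?_cons_cons]
    rw [h1, ← h2]; exact hP.2.2.2
  have hNUh : ¬ Uses u w h := by
    rintro ⟨X, Y, hXY⟩
    have huX : u ∉ X := by
      have := hXY ▸ hnodup
      obtain ⟨-, -, hu, -⟩ := nodup_facts (u := u) (w := w) this
      exact hu
    have huM' : u ∉ M ++ w :: BP := by
      simp only [List.mem_append, List.mem_cons, not_or]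
      exact ⟨huM, fun h => huwne h, huBP⟩
    obtain ⟨-, h2⟩ := split_unique (by exact huAP) huX (hdef ▸ hXY)
    cases M with
    | nil => exact hMne rfl
    | cons m M' =>
      simp only [List.cons_append, List.cons.injEq] at h2
      exact hwM (h2.1 ▸ List.mem_cons_self (a := m) (l := M'))
  -- traces agree
  have hhtr : ∀ z ∈ S, (z ∈ h ↔ z ∈ Q) := by
    intro z hz
    have hzM : z ∉ M := fun hm => hMS z hm hz
    have h1 : z ∈ h ↔ z ∈ AP ++ u :: w :: BP := by
      rw [hdef]
      simp only [List.mem_append, List.mem_cons]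
      tauto
    rw [h1]
    exact htrPQ z (Finset.mem_insert_of_mem hz)
  have heq : h = Q :=
    hstar h Q ⟨hchain, hnodup, hhead, hlast⟩ hQ hhtr (iff_of_false hNUh hNUQ)
  have hmem : M.head hMne ∈ Q := by
    rw [← heq, hdef]
    simp [List.head_mem hMne]
  have hnmem : M.head hMne ∉ AP ++ u :: w :: BP := hMdisj _ (List.head_mem hMne)
  exact hnmem ((htrPQ (M.head hMne) (Finset.mem_insert_self _ _)).mpr hmem)

end SubdivAux

namespace SubdivAux

variable {V : Type*} [DecidableEq V] {E : V → V → Prop} {s t u w : V}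

lemma mem_of_getLast?' : ∀ {l : List V} {a : V}, l.getLast? = some a → a ∈ l
  | [], a, h => by simp at h
  | [b], a, h => by simp_all
  | b :: c :: l, a, h => by
    rw [List.getLast?_cons_cons] at h
    exact List.mem_cons_of_mem _ (mem_of_getLast?' h)

lemma mem_of_head?' {l : List V} {a : V} (h : l.head? = some a) : a ∈ l := by
  cases l with
  | nil => simp at h
  | cons b l => simp_all

lemma caseB (hacyc : DiAcyclic E) (huw : E u w) {S : Finset V}
    (hstar : ∀ p q, DiPath E s t p → DiPath E s t q →
      (∀ z ∈ S, (z ∈ p ↔ z ∈ q)) → (Uses u w p ↔ Uses u w q) → p = q)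
    (hD : ∀ p q, DiPath E s t p → DiPath E s t q → Uses u w p → ¬ Uses u w q →
      (∀ z ∈ S, (z ∈ p ↔ z ∈ q)) → u ∈ q → w ∈ q → False)
    {p₂ q₂ : List V} (hp₂ : DiPath E s t p₂) (hq₂ : DiPath E s t q₂)
    (hU₂ : Uses u w p₂) (hNU₂ : ¬ Uses u w q₂)
    (htr₂ : ∀ z ∈ S, (z ∈ p₂ ↔ z ∈ q₂)) (hu₂ : u ∈ q₂) :
    ∃ x : V, Tracking E s t (insert x S) := by
  have huwne : u ≠ w := by rintro rfl; exact hacyc u (Relation.TransGen.single huw)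
  have hw₂ : w ∉ q₂ := fun hw => hD p₂ q₂ hp₂ hq₂ hU₂ hNU₂ htr₂ hu₂ hw
  obtain ⟨A₂, B₂, rfl⟩ := hU₂
  obtain ⟨C₂, D₂, hq₂eq⟩ := List.append_of_mem hu₂
  subst hq₂eq
  obtain ⟨nA₂, nB₂, huA₂, hwA₂, huB₂, hwB₂, -, -⟩ := nodup_facts (u := u) (w := w) hp₂.2.1
  have hq₂n := hq₂.2.1
  rw [List.nodup_append, List.nodup_cons] at hq₂n
  obtain ⟨nC₂, ⟨huD₂, nD₂⟩, hdisj₂⟩ := hq₂n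
  have hwD₂ : w ∉ D₂ := fun h => hw₂ (by simp [h])
  have hwC₂ : w ∉ C₂ := fun h => hw₂ (by simp [h])
  -- chain facts for p₂, q₂
  have hq₂c := hq₂.1
  rw [List.Chain', List.isChain_append, List.isChain_cons] at hq₂c
  obtain ⟨hC₂c, ⟨hjD, hD₂c⟩, -⟩ := hq₂c
  have hp₂c := hp₂.1
  rw [List.Chain', List.isChain_append, List.isChain_cons_cons, List.isChain_cons] at hp₂c
  obtain ⟨hA₂c, ⟨-, hjB, hB₂c⟩, -⟩ := hp₂c
  -- nonemptiness
  have hB₂ne : B₂ ≠ [] := by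
    rintro rfl
    have h1 : (A₂ ++ u :: w :: ([] : List V)).getLast? = some t := hp₂.2.2.2
    rw [getLast?_append_right (by simp), List.getLast?_cons_cons] at h1
    simp only [List.getLast?_singleton, Option.some.injEq] at h1
    exact hw₂ (by rw [h1]; exact mem_of_getLast?' hq₂.2.2.2)
  have hD₂ne : D₂ ≠ [] := by
    rintro rfl
    have h1 : (C₂ ++ u :: ([] : List V)).getLast? = some t := hq₂.2.2.2
    rw [getLast?_append_right (by simp)] at h1
    simp only [List.getLast?_singleton, Option.some.injEq] at h1
    have h2 : t ∈ w :: B₂ := by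
      have h3 := hp₂.2.2.2
      rw [getLast?_append_right (by simp), List.getLast?_cons_cons] at h3
      exact mem_of_getLast?' h3
    rw [← h1] at h2
    rcases List.mem_cons.mp h2 with h | h
    · exact huwne h
    · exact huB₂ h
  -- witness is w
  refine ⟨w, tracking_of_mixed hstar ?_⟩
  intro P Q hP hQ htrPQ hUP hNUQ
  have hwQ : w ∈ Q := (htrPQ w (Finset.mem_insert_self _ _)).mp hUP.mem_right
  have huQ : u ∉ Q := fun hu => hD P Q hP hQ hUP hNUQ
    (fun z hz => htrPQ z (Finset.mem_insert_of_mem hz)) hu hwQ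
  obtain ⟨A₃, B₃, rfl⟩ := hUP
  obtain ⟨C₃, D₃, hQeq⟩ := List.append_of_mem hwQ
  subst hQeq
  obtain ⟨nA₃, nB₃, huA₃, hwA₃, huB₃, hwB₃, -, -⟩ := nodup_facts (u := u) (w := w) hP.2.1
  have hQn := hQ.2.1
  rw [List.nodup_append, List.nodup_cons] at hQn
  obtain ⟨nC₃, ⟨hwD₃, nD₃⟩, hdisjQ⟩ := hQn
  have hwC₃ : w ∉ C₃ := fun h => hdisjQ _ h _ (by simp) rfl
  have huC₃ : u ∉ C₃ := fun h => huQ (by simp [h])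
  have huD₃ : u ∉ D₃ := fun h => huQ (by simp [h])
  -- chain facts for P, Q
  have hQc := hQ.1
  rw [List.Chain', List.isChain_append, List.isChain_cons] at hQc
  obtain ⟨hC₃c, ⟨hjD₃, hD₃c⟩, hjC⟩ := hQc
  have hPc := hP.1
  rw [List.Chain', List.isChain_append, List.isChain_cons_cons, List.isChain_cons] at hPc
  obtain ⟨hA₃c, ⟨-, hjB₃, hB₃c⟩, -⟩ := hPc
  have hjP : ∀ x ∈ A₃.getLast?, E x u := by
    have := hP.1
    rw [List.Chain', List.isChain_append] at this
    exact fun x hx => this.2.2 x hx u rfl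
  have hjC' : ∀ x ∈ C₃.getLast?, E x w := by
    intro x hx
    exact hjC x hx w rfl
  -- nonemptiness
  have hA₃ne : A₃ ≠ [] := by
    rintro rfl
    have h1 : (([] : List V) ++ u :: w :: B₃).head? = some s := hP.2.2.1
    simp only [List.nil_append, List.head?_cons, Option.some.injEq] at h1
    exact huQ (by rw [h1]; exact mem_of_head?' hQ.2.2.1)
  have hC₃ne : C₃ ≠ [] := by
    rintro rfl
    have h1 : (([] : List V) ++ w :: D₃).head? = some s := hQ.2.2.1
    simp only [List.nil_append, List.head?_cons, Option.some.injEq] at h1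
    cases A₃ with
    | nil =>
      have h2 : ((([] : List V)) ++ u :: w :: B₃).head? = some s := hP.2.2.1
      simp only [List.nil_append, List.head?_cons, Option.some.injEq] at h2
      exact huwne (h2.trans h1.symm)
    | cons a A₃' =>
      have h2 : ((a :: A₃') ++ u :: w :: B₃).head? = some s := hP.2.2.1
      simp only [List.cons_append, List.head?_cons, Option.some.injEq] at h2
      exact hwA₃ (by rw [h1, ← h2]; exact List.mem_cons_self (a := a) (l := A₃'))
  -- the two hybrid paths
  set n₂ : List V := A₃ ++ u :: D₂ with hn₂def
  set j : List V := C₃ ++ w :: B₂ with hjdef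
  have hn₂path : DiPath E s t n₂ := by
    refine ⟨?_, ?_, ?_, ?_⟩
    · rw [hn₂def, List.Chain', List.isChain_append]
      refine ⟨hA₃c, List.isChain_cons.mpr ⟨hjD, hD₂c⟩, ?_⟩
      intro x hx y hy
      simp only [List.head?_cons, Option.mem_def, Option.some.injEq] at hy
      subst hy; exact hjP x hx
    · rw [hn₂def, List.nodup_append, List.nodup_cons]
      refine ⟨nA₃, ⟨huD₂, nD₂⟩, ?_⟩
      intro a ha _ hb rfl
      rcases List.mem_cons.mp hb with rfl | hb'
      · exact huA₃ ha
      · exact no_cycle hacyc (tg_to_of_mem_left hP.1 ha) (tg_split hq₂.1 hb')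
    · rw [hn₂def, head?_append_left hA₃ne, ← head?_append_left (l₂ := u :: w :: B₃) hA₃ne]
      exact hP.2.2.1
    · rw [hn₂def, getLast?_append_right (by simp), getLast?_cons_of_ne_nil hD₂ne]
      have := hq₂.2.2.2
      rwa [getLast?_append_right (by simp), getLast?_cons_of_ne_nil hD₂ne] at this
  have hjpath : DiPath E s t j := by
    refine ⟨?_, ?_, ?_, ?_⟩
    · rw [hjdef, List.Chain', List.isChain_append]
      refine ⟨hC₃c, List.isChain_cons.mpr ⟨hjB, hB₂c⟩, ?_⟩
      intro x hx y hy
      simp only [List.head?_cons, Option.mem_def, Option.some.injEq] at hy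
      subst hy; exact hjC' x hx
    · rw [hjdef, List.nodup_append, List.nodup_cons]
      refine ⟨nC₃, ⟨hwB₂, nB₂⟩, ?_⟩
      intro a ha _ hb rfl
      rcases List.mem_cons.mp hb with rfl | hb'
      · exact hwC₃ ha
      · have hc2 : ((A₂ ++ [u]) ++ w :: B₂).Chain' E := by
          simpa [List.append_assoc] using hp₂.1
        exact no_cycle hacyc (tg_to_of_mem_left hQ.1 ha) (tg_split hc2 hb')
    · rw [hjdef, head?_append_left hC₃ne, ← head?_append_left (l₂ := w :: D₃) hC₃ne]
      exact hQ.2.2.1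
    · rw [hjdef, getLast?_append_right (by simp)]
      have := hp₂.2.2.2
      rwa [getLast?_append_right (by simp), List.getLast?_cons_cons] at this
  have hNUn : ¬ Uses u w n₂ := by
    intro hh
    rcases (by simpa [hn₂def] using hh.mem_right : w ∈ A₃ ∨ w = u ∨ w ∈ D₂) with h | h | h
    · exact hwA₃ h
    · exact huwne h.symm
    · exact hwD₂ h
  have hNUj : ¬ Uses u w j := by
    intro hh
    rcases (by simpa [hjdef] using hh.mem_left : u ∈ C₃ ∨ u = w ∨ u ∈ B₂) with h | h | h
    · exact huC₃ h
    · exact huwne h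
    · exact huB₂ h
  have huS : u ∉ S := fun h =>
    huQ ((htrPQ u (Finset.mem_insert_of_mem h)).mp (by simp))
  have hwS : w ∉ S := fun h => hw₂ ((htr₂ w h).mp (by simp))
  have htrace : ∀ z ∈ S, (z ∈ n₂ ↔ z ∈ j) := by
    intro z hz
    have hzu : z ≠ u := fun e => huS (e ▸ hz)
    have hzw : z ≠ w := fun e => hwS (e ▸ hz)
    have claim1 : z ∈ A₃ ↔ z ∈ C₃ := by
      constructor
      · intro h
        have hzQ : z ∈ C₃ ++ w :: D₃ :=
          (htrPQ z (Finset.mem_insert_of_mem hz)).mp (by simp [h])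
        rcases (by simpa using hzQ : z ∈ C₃ ∨ z = w ∨ z ∈ D₃) with h' | h' | h'
        · exact h'
        · exact (hzw h').elim
        · exact ((hacyc w ((tg_split hQ.1 h').trans
            ((tg_to_of_mem_left hP.1 h).trans (Relation.TransGen.single huw))))).elim
      · intro h
        have hzP : z ∈ A₃ ++ u :: w :: B₃ :=
          (htrPQ z (Finset.mem_insert_of_mem hz)).mpr (by simp [h])
        rcases (by simpa using hzP : z ∈ A₃ ∨ z = u ∨ z = w ∨ z ∈ B₃) with h' | h' | h' | h'
        · exact h'
        · exact (huC₃ (h' ▸ h)).elim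
        · exact (hwC₃ (h' ▸ h)).elim
        · have hc2 : ((A₃ ++ [u]) ++ w :: B₃).Chain' E := by
            simpa [List.append_assoc] using hP.1
          exact (no_cycle hacyc (tg_to_of_mem_left hQ.1 h) (tg_split hc2 h')).elim
    have claim2 : z ∈ D₂ ↔ z ∈ B₂ := by
      constructor
      · intro h
        have hzp : z ∈ A₂ ++ u :: w :: B₂ := (htr₂ z hz).mpr (by simp [h])
        rcases (by simpa using hzp : z ∈ A₂ ∨ z = u ∨ z = w ∨ z ∈ B₂) with h' | h' | h' | h'
        · exact (no_cycle hacyc (tg_to_of_mem_left hp₂.1 h') (tg_split hq₂.1 h)).elim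
        · exact (hzu h').elim
        · exact (hzw h').elim
        · exact h'
      · intro h
        have hzq : z ∈ C₂ ++ u :: D₂ := (htr₂ z hz).mp (by simp [h])
        rcases (by simpa using hzq : z ∈ C₂ ∨ z = u ∨ z ∈ D₂) with h' | h' | h'
        · exact (no_cycle hacyc (tg_to_of_mem_left hq₂.1 h')
            (tg_split hp₂.1 (by simp [h]))).elim
        · exact (hzu h').elim
        · exact h'
    rw [hn₂def, hjdef]
    simp only [List.mem_append, List.mem_cons]
    constructor
    · rintro (h | h | h)
      · exact Or.inl (claim1.mp h)
      · exact (hzu h).elim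
      · exact Or.inr (Or.inr (claim2.mp h))
    · rintro (h | h | h)
      · exact Or.inl (claim1.mpr h)
      · exact (hzw h).elim
      · exact Or.inr (Or.inr (claim2.mpr h))
  have heq : n₂ = j := hstar n₂ j hn₂path hjpath htrace (iff_of_false hNUn hNUj)
  have hun₂ : u ∈ n₂ := by simp [hn₂def]
  rw [heq, hjdef] at hun₂
  rcases (by simpa using hun₂ : u ∈ C₃ ∨ u = w ∨ u ∈ B₂) with h | h | h
  · exact huC₃ h
  · exact huwne h
  · exact huB₂ h

/-- The crux replacement lemma. -/
lemma crux (hacyc : DiAcyclic E) (huw : E u w) (S : Finset V)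
    (hstar : ∀ p q, DiPath E s t p → DiPath E s t q →
      (∀ z ∈ S, (z ∈ p ↔ z ∈ q)) → (Uses u w p ↔ Uses u w q) → p = q) :
    ∃ x : V, Tracking E s t (insert x S) := by
  by_cases hD : ∃ p q, DiPath E s t p ∧ DiPath E s t q ∧ Uses u w p ∧ ¬ Uses u w q ∧
      (∀ z ∈ S, (z ∈ p ↔ z ∈ q)) ∧ u ∈ q ∧ w ∈ q
  · obtain ⟨p₀, q₀, hp₀, hq₀, hU, hNU, htr, hu0, hw0⟩ := hD
    exact caseA hacyc huw hstar hp₀ hq₀ hU hNU htr hu0 hw0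
  · push_neg at hD
    by_cases hB : ∃ p q, DiPath E s t p ∧ DiPath E s t q ∧ Uses u w p ∧ ¬ Uses u w q ∧
        (∀ z ∈ S, (z ∈ p ↔ z ∈ q)) ∧ u ∈ q
    · obtain ⟨p₂, q₂, hp₂, hq₂, hU₂, hNU₂, htr₂, hu₂⟩ := hB
      exact caseB hacyc huw hstar
        (fun p q hp hq h1 h2 h3 h4 h5 => hD p q hp hq h1 h2 h3 h4 h5)
        hp₂ hq₂ hU₂ hNU₂ htr₂ hu₂
    · push_neg at hB
      refine ⟨u, tracking_of_mixed hstar ?_⟩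
      intro P Q hP hQ htrPQ hUP hNUQ
      exact hB P Q hP hQ hUP hNUQ
        (fun z hz => htrPQ z (Finset.mem_insert_of_mem hz))
        ((htrPQ u (Finset.mem_insert_self _ _)).mp hUP.mem_left)

end SubdivAux

namespace SubdivAux

variable {V : Type*} [DecidableEq V]

/-- Subdivide: insert `none` between adjacent `u`, `w`. -/
def sub (u w : V) : List V → List (Option V)
  | [] => []
  | [a] => [some a]
  | a :: b :: l =>
    if a = u ∧ b = w then some a :: none :: sub u w (b :: l)
    else some a :: sub u w (b :: l)

variable {u w : V}

theorem sub_ne_nil : ∀ {l : List V}, l ≠ [] → sub u w l ≠ []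
  | [], h => absurd rfl h
  | [a], _ => by simp [sub]
  | a :: b :: l, _ => by
    by_cases h : a = u ∧ b = w <;> simp [sub, h]

theorem head?_sub : ∀ (l : List V), (sub u w l).head? = l.head?.map some
  | [] => by simp [sub]
  | [a] => by simp [sub]
  | a :: b :: l => by
    by_cases h : a = u ∧ b = w <;> simp [sub, h]

theorem getLast?_sub : ∀ (l : List V), (sub u w l).getLast? = l.getLast?.map some
  | [] => by simp [sub]
  | [a] => by simp [sub]
  | a :: b :: l => by
    have hne : sub u w (b :: l) ≠ [] := sub_ne_nil (by simp)
    have ih := getLast?_sub (b :: l)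
    by_cases h : a = u ∧ b = w
    · rw [sub, if_pos h, getLast?_cons_of_ne_nil (by simp [hne]),
        getLast?_cons_of_ne_nil hne, ih, List.getLast?_cons_cons]
    · rw [sub, if_neg h, getLast?_cons_of_ne_nil hne, ih, List.getLast?_cons_cons]

theorem mem_some_sub : ∀ {l : List V} {x : V}, some x ∈ sub u w l ↔ x ∈ l
  | [], x => by simp [sub]
  | [a], x => by simp [sub]
  | a :: b :: l, x => by
    have ih := mem_some_sub (l := b :: l) (x := x)
    by_cases h : a = u ∧ b = w
    · rw [sub, if_pos h]; simp [ih]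
    · rw [sub, if_neg h]; simp [ih]

theorem none_mem_sub : ∀ {l : List V}, none ∈ sub u w l ↔ Uses u w l
  | [] => by simp [sub, not_uses_nil]
  | [a] => by simp [sub, not_uses_singleton]
  | a :: b :: l => by
    by_cases h : a = u ∧ b = w
    · obtain ⟨rfl, rfl⟩ := h
      rw [sub, if_pos ⟨rfl, rfl⟩]
      constructor
      · intro _; exact ⟨[], l, rfl⟩
      · intro _; simp
    · rw [sub, if_neg h, uses_cons_iff h]
      simp [none_mem_sub (l := b :: l)]

theorem reduceOption_sub : ∀ (l : List V), (sub u w l).reduceOption = l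
  | [] => by simp [sub]
  | [a] => by simp [sub, List.reduceOption]
  | a :: b :: l => by
    have ih := reduceOption_sub (b :: l)
    by_cases h : a = u ∧ b = w
    · rw [sub, if_pos h]
      simp [List.reduceOption_cons_of_some, List.reduceOption_cons_of_none, ih]
    · rw [sub, if_neg h]
      simp [List.reduceOption_cons_of_some, ih]

theorem nodup_sub : ∀ {l : List V}, l.Nodup → (sub u w l).Nodup
  | [], _ => by simp [sub]
  | [a], _ => by simp [sub]
  | a :: b :: l, hn => by
    have hn' : (b :: l).Nodup := hn.of_cons
    have ha : a ∉ b :: l := (List.nodup_cons.mp hn).1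
    have ih := nodup_sub hn'
    by_cases h : a = u ∧ b = w
    · obtain ⟨rfl, rfl⟩ := h
      rw [sub, if_pos ⟨rfl, rfl⟩]
      refine List.nodup_cons.mpr ⟨?_, List.nodup_cons.mpr ⟨?_, ih⟩⟩
      · simp only [List.mem_cons, not_or]
        exact ⟨by simp, fun hm => ha (mem_some_sub.mp hm)⟩
      · intro hm
        exact ha (Uses.mem_left (none_mem_sub.mp hm))
    · rw [sub, if_neg h]
      exact List.nodup_cons.mpr ⟨fun hm => ha (mem_some_sub.mp hm), ih⟩

theorem chain'_sub {E : V → V → Prop} {E' : Option V → Option V → Prop}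
    (hE' : ∀ a b : Option V, E' a b ↔
      ((∃ x y : V, a = some x ∧ b = some y ∧ E x y ∧ ¬ (x = u ∧ y = w)) ∨
        (a = some u ∧ b = none) ∨ (a = none ∧ b = some w))) :
    ∀ {l : List V}, l.Chain' E → (sub u w l).Chain' E'
  | [], _ => by simp [sub, List.Chain']
  | [a], _ => by simp [sub, List.Chain']
  | a :: b :: l, hc => by
    rw [List.Chain', List.isChain_cons_cons] at hc
    have ih := chain'_sub hE' hc.2
    have hhead : (sub u w (b :: l)).head? = some (some b) := by
      rw [head?_sub]; rfl
    by_cases h : a = u ∧ b = w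
    · obtain ⟨rfl, rfl⟩ := h
      rw [sub, if_pos ⟨rfl, rfl⟩]
      refine List.isChain_cons_cons.mpr ⟨(hE' _ _).mpr (Or.inr (Or.inl ⟨rfl, rfl⟩)), ?_⟩
      refine List.isChain_cons.mpr ⟨?_, ih⟩
      intro y hy
      rw [hhead] at hy
      simp only [Option.mem_def, Option.some.injEq] at hy
      subst hy
      exact (hE' _ _).mpr (Or.inr (Or.inr ⟨rfl, rfl⟩))
    · rw [sub, if_neg h]
      refine List.isChain_cons.mpr ⟨?_, ih⟩
      intro y hy
      rw [hhead] at hy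
      simp only [Option.mem_def, Option.some.injEq] at hy
      subst hy
      exact (hE' _ _).mpr (Or.inl ⟨a, b, rfl, rfl, hc.1, h⟩)

theorem nodup_reduceOption : ∀ {l : List (Option V)}, l.Nodup → l.reduceOption.Nodup
  | [], _ => by simp
  | none :: l, h => by
    rw [List.reduceOption_cons_of_none]
    exact nodup_reduceOption h.of_cons
  | some a :: l, h => by
    rw [List.reduceOption_cons_of_some]
    refine List.nodup_cons.mpr ⟨?_, nodup_reduceOption h.of_cons⟩
    intro hm
    exact (List.nodup_cons.mp h).1 (List.reduceOption_mem_iff.mp hm)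

/-- Reconstruction: a `E'`-path is the subdivision of its projection. -/
theorem recon {E : V → V → Prop} {E' : Option V → Option V → Prop}
    (hE' : ∀ a b : Option V, E' a b ↔
      ((∃ x y : V, a = some x ∧ b = some y ∧ E x y ∧ ¬ (x = u ∧ y = w)) ∨
        (a = some u ∧ b = none) ∨ (a = none ∧ b = some w)))
    (huw : E u w) :
    ∀ (p : List (Option V)), p.Chain' E' → p.head? ≠ some none →
      p.getLast? ≠ some none →
      sub u w p.reduceOption = p ∧ p.reduceOption.Chain' E
  | [], _, _, _ => by simp [sub, List.Chain']
  | none :: rest, _, hh, _ => by simp at hh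
  | [some a], _, _, _ => by simp [sub, List.reduceOption, List.Chain']
  | [some a, none], hc, _, hl => by
    rw [List.getLast?_cons_cons] at hl
    simp at hl
  | some a :: none :: b :: rest, hc, hh, hl => by
    rw [List.Chain', List.isChain_cons_cons, List.isChain_cons_cons] at hc
    obtain ⟨h1, h2, hc3⟩ := hc
    have hau : u = a := by
      rcases (hE' _ _).mp h1 with ⟨x, y, -, hy, -⟩ | ⟨hx, -⟩ | ⟨hx, -⟩
      · simp at hy
      · exact (by simpa using hx : a = u).symm
      · simp at hx
    have hbw : b = some w := by
      rcases (hE' _ _).mp h2 with ⟨x, y, hx, -⟩ | ⟨hx, -⟩ | ⟨-, hy⟩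
      · simp at hx
      · simp at hx
      · exact hy
    have hl' : (b :: rest).getLast? ≠ some none := by
      rwa [List.getLast?_cons_cons, List.getLast?_cons_cons] at hl
    obtain ⟨ih1, ih2⟩ := recon hE' huw (b :: rest) hc3 (by rw [hbw]; simp) hl'
    subst hbw
    subst hau
    have hred : (some u :: none :: some w :: rest).reduceOption =
        u :: (some w :: rest).reduceOption := by
      simp [List.reduceOption_cons_of_some, List.reduceOption_cons_of_none]
    rw [hred]
    have hred2 : (some w :: rest).reduceOption = w :: rest.reduceOption := by
      simp [List.reduceOption_cons_of_some]
    constructor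
    · rw [hred2, sub, if_pos ⟨rfl, rfl⟩, ← hred2, ih1]
    · rw [hred2, List.Chain', List.isChain_cons_cons, ← hred2]
      exact ⟨huw, ih2⟩
  | some a :: some b :: rest, hc, hh, hl => by
    rw [List.Chain', List.isChain_cons_cons] at hc
    obtain ⟨h1, hc2⟩ := hc
    have hab : E a b ∧ ¬ (a = u ∧ b = w) := by
      rcases (hE' _ _).mp h1 with ⟨x, y, hx, hy, hE, hne⟩ | ⟨-, hy⟩ | ⟨hx, -⟩
      · simp only [Option.some.injEq] at hx hy
        subst hx hy; exact ⟨hE, hne⟩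
      · simp at hy
      · simp at hx
    have hl' : (some b :: rest).getLast? ≠ some none := by
      rwa [List.getLast?_cons_cons] at hl
    obtain ⟨ih1, ih2⟩ := recon hE' huw (some b :: rest) hc2 (by simp) hl' 
    have hred : (some a :: some b :: rest).reduceOption =
        a :: (some b :: rest).reduceOption := by
      simp [List.reduceOption_cons_of_some]
    have hred2 : (some b :: rest).reduceOption = b :: rest.reduceOption := by
      simp [List.reduceOption_cons_of_some]
    rw [hred]
    constructor
    · rw [hred2, sub, if_neg hab.2, ← hred2, ih1]
    · rw [hred2, List.Chain', List.isChain_cons_cons, ← hred2]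
      exact ⟨hab.1, ih2⟩

end SubdivAux

namespace SubdivAux

variable {V : Type*} [DecidableEq V] {u w : V}

lemma dipath_sub {E : V → V → Prop} {E' : Option V → Option V → Prop}
    (hE' : ∀ a b : Option V, E' a b ↔
      ((∃ x y : V, a = some x ∧ b = some y ∧ E x y ∧ ¬ (x = u ∧ y = w)) ∨
        (a = some u ∧ b = none) ∨ (a = none ∧ b = some w)))
    {s t : V} {p : List V} (hp : DiPath E s t p) :
    DiPath E' (some s) (some t) (sub u w p) :=
  ⟨chain'_sub hE' hp.1, nodup_sub hp.2.1,
    by rw [head?_sub, hp.2.2.1]; rfl,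
    by rw [getLast?_sub, hp.2.2.2]; rfl⟩

lemma head?_of_sub_eq {l : List V} {p' : List (Option V)} {a : V}
    (hsub : sub u w l = p') (h : p'.head? = some (some a)) : l.head? = some a := by
  have h2 := head?_sub (u := u) (w := w) l
  rw [hsub, h] at h2
  cases hl : l.head? <;> rw [hl] at h2 <;> simp_all

lemma getLast?_of_sub_eq {l : List V} {p' : List (Option V)} {a : V}
    (hsub : sub u w l = p') (h : p'.getLast? = some (some a)) : l.getLast? = some a := by
  have h2 := getLast?_sub (u := u) (w := w) l
  rw [hsub, h] at h2
  cases hl : l.getLast? <;> rw [hl] at h2 <;> simp_all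

end SubdivAux

/-- subdividing an edge `(u,w)` of a DAG without parallel edges preserves
the existence of a tracking set of size at most `k`. The subdivided graph lives on
`Option V`, where `none` is the new vertex `v`. -/
theorem subdivide_edge_tracking_iff {V : Type*} [Fintype V] [DecidableEq V]
    (E : V → V → Prop) (s t u w : V)
    (hacyc : DiAcyclic E)
    (huw : E u w)
    (E' : Option V → Option V → Prop)
    (hE' : ∀ a b : Option V, E' a b ↔
      ((∃ x y : V, a = some x ∧ b = some y ∧ E x y ∧ ¬ (x = u ∧ y = w)) ∨
        (a = some u ∧ b = none) ∨ (a = none ∧ b = some w)))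
    (k : ℕ) :
    (∃ T : Finset V, T.card ≤ k ∧ Tracking E s t T) ↔
      (∃ T' : Finset (Option V), T'.card ≤ k ∧ Tracking E' (some s) (some t) T') := by
  open SubdivAux in
  constructor
  · rintro ⟨T, hTcard, hTtrack⟩
    refine ⟨T.image some, le_trans Finset.card_image_le hTcard, ?_⟩
    intro p' q' hp' hq' htr
    obtain ⟨hsubp, hchp⟩ := recon hE' huw p' hp'.1
      (by rw [hp'.2.2.1]; simp) (by rw [hp'.2.2.2]; simp)
    obtain ⟨hsubq, hchq⟩ := recon hE' huw q' hq'.1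
      (by rw [hq'.2.2.1]; simp) (by rw [hq'.2.2.2]; simp)
    have hpDi : DiPath E s t p'.reduceOption :=
      ⟨hchp, nodup_reduceOption hp'.2.1,
        head?_of_sub_eq hsubp hp'.2.2.1, getLast?_of_sub_eq hsubp hp'.2.2.2⟩
    have hqDi : DiPath E s t q'.reduceOption :=
      ⟨hchq, nodup_reduceOption hq'.2.1,
        head?_of_sub_eq hsubq hq'.2.2.1, getLast?_of_sub_eq hsubq hq'.2.2.2⟩
    rw [inter_eq_iff] at htr
    have htr' : ∀ z ∈ T, (z ∈ p'.reduceOption ↔ z ∈ q'.reduceOption) := by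
      intro z hz
      have := htr (some z) (Finset.mem_image_of_mem some hz)
      rw [List.reduceOption_mem_iff, List.reduceOption_mem_iff]
      exact this
    have hpq : p'.reduceOption = q'.reduceOption :=
      hTtrack _ _ hpDi hqDi (inter_eq_iff.mpr htr')
    rw [← hsubp, ← hsubq, hpq]
  · rintro ⟨T', hT'card, hT'track⟩
    have hinj : ∀ s : Set (Option V), Set.InjOn some (some ⁻¹' s) :=
      fun _ => Set.injOn_of_injective (Option.some_injective V)
    set S : Finset V := T'.preimage some (hinj _) with hSdef
    have hSmem : ∀ z : V, z ∈ S ↔ some z ∈ T' := fun z => Finset.mem_preimage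
    by_cases hnone : none ∈ T'
    · have hstar : ∀ p q, DiPath E s t p → DiPath E s t q →
          (∀ z ∈ S, (z ∈ p ↔ z ∈ q)) → (Uses u w p ↔ Uses u w q) → p = q := by
        intro p q hp hq htr huse
        have heq := hT'track (sub u w p) (sub u w q) (dipath_sub hE' hp) (dipath_sub hE' hq)
          (inter_eq_iff.mpr ?_)
        · rw [← reduceOption_sub (u := u) (w := w) p, ← reduceOption_sub (u := u) (w := w) q,
            heq]
        · intro y hy
          cases y with
          | none => rw [none_mem_sub, none_mem_sub]; exact huse
          | some z =>
            rw [mem_some_sub, mem_some_sub]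
            exact htr z ((hSmem z).mpr hy)
      obtain ⟨x, hx⟩ := crux hacyc huw S hstar
      refine ⟨insert x S, ?_, hx⟩
      have h1 : S.card ≤ (T'.erase none).card :=
        Finset.card_le_card_of_injOn some
          (fun z hz => Finset.mem_erase.mpr ⟨by simp, (hSmem z).mp hz⟩)
          (Set.injOn_of_injective (Option.some_injective V))
      have h2 : (T'.erase none).card = T'.card - 1 := Finset.card_erase_of_mem hnone
      have h3 : 1 ≤ T'.card := Finset.card_pos.mpr ⟨none, hnone⟩
      have h4 : (insert x S).card ≤ S.card + 1 := Finset.card_insert_le _ _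
      have h5 : T'.card ≤ k := hT'card
      omega
    · have hScard : S.card ≤ T'.card :=
        Finset.card_le_card_of_injOn some (fun z hz => (hSmem z).mp hz)
          (Set.injOn_of_injective (Option.some_injective V))
      refine ⟨S, le_trans hScard hT'card, ?_⟩
      intro p q hp hq htr
      rw [inter_eq_iff] at htr
      have heq := hT'track (sub u w p) (sub u w q) (dipath_sub hE' hp) (dipath_sub hE' hq)
        (inter_eq_iff.mpr ?_)
      · rw [← reduceOption_sub (u := u) (w := w) p, ← reduceOption_sub (u := u) (w := w) q,
          heq]
      · intro y hy
        cases y with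
        | none => exact absurd hy hnone
        | some z =>
          rw [mem_some_sub, mem_some_sub]
          exact htr z ((hSmem z).mpr hy)
end

section
/- Let G be a finite directed acyclic graph with source s and sink t such that every edge lies on some directed s-t path, and suppose there are two distinct vertices x, y each of total degree 2 and both with edges from u and to v, i.e., (u,x),(u,y),(x,v),(y,v) ∈ E(G). Then every tracking set for G must contain x or y. -/
section Aux

variable {V : Type*} [DecidableEq V]

lemma aux_split_unique {p C₁ C₂ D₁ D₂ : List V} {c : V} (hn : p.Nodup)
    (h1 : p = C₁ ++ c :: D₁) (h2 : p = C₂ ++ c :: D₂) : C₁ = C₂ := by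
  have hc1 : c ∉ C₁ := fun h =>
    (List.disjoint_of_nodup_append (h1 ▸ hn)) h List.mem_cons_self
  have hc2 : c ∉ C₂ := fun h =>
    (List.disjoint_of_nodup_append (h2 ▸ hn)) h List.mem_cons_self
  have e : C₁ ++ c :: D₁ = C₂ ++ c :: D₂ := h1.symm.trans h2
  have hlen : C₁.length = C₂.length := by
    have l1 : (C₁ ++ c :: D₁).idxOf c = C₁.length := by
      rw [List.idxOf_append_of_notMem hc1, List.idxOf_cons_self]
      omega
    have l2 : (C₂ ++ c :: D₂).idxOf c = C₂.length := by
      rw [List.idxOf_append_of_notMem hc2, List.idxOf_cons_self]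
      omega
    rw [← l1, ← l2, e]
  exact (List.append_inj e hlen).1

end Aux



/-- if distinct vertices `x`, `y` both have total degree 2 and edges from
`u` and to `v`, then every tracking set contains `x` or `y`. -/
theorem tracker_forced_by_parallel_paths {V : Type*} [Fintype V] [DecidableEq V]
    (E : V → V → Prop) [DecidableRel E] (s t : V)
    (hacyc : DiAcyclic E)
    (hedge : ∀ a b : V, E a b → ∃ p : List V, DiPath E s t p ∧ [a, b] <:+: p)
    (u v x y : V) (hxy : x ≠ y)
    (hux : E u x) (huy : E u y) (hxv : E x v) (hyv : E y v)
    (hdegx : indeg E x + outdeg E x = 2) (hdegy : indeg E y + outdeg E y = 2) :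
    ∀ T : Finset V, Tracking E s t T → x ∈ T ∨ y ∈ T := by
  intro T htrack
  simp only [DiPath] at hedge
  simp only [indeg, outdeg] at hdegx hdegy
  simp only [Tracking, DiPath] at htrack
  by_contra hcon
  push_neg at hcon
  obtain ⟨hxT, hyT⟩ := hcon
  -- unique out-neighbours of x and y
  have houx : ∀ w, E x w → w = v := by
    intro w hw
    have h1 : 1 ≤ (Finset.univ.filter fun z => E z x).card :=
      Finset.card_pos.mpr ⟨u, by simp [hux]⟩
    have h2 : (Finset.univ.filter fun z => E x z).card ≤ 1 := by omega
    exact Finset.card_le_one.mp h2 w (by simp [hw]) v (by simp [hxv])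
  have houy : ∀ w, E y w → w = v := by
    intro w hw
    have h1 : 1 ≤ (Finset.univ.filter fun z => E z y).card :=
      Finset.card_pos.mpr ⟨u, by simp [huy]⟩
    have h2 : (Finset.univ.filter fun z => E y z).card ≤ 1 := by omega
    exact Finset.card_le_one.mp h2 w (by simp [hw]) v (by simp [hyv])
  -- any in-neighbour of v is distinct from t
  have hnt : ∀ w : V, E w v → w ≠ t := by
    intro w hwv hwt
    obtain ⟨p₀, ⟨_, hnd, _, hlast⟩, C, D, hCD⟩ := hedge w v hwv
    have hp₀ : p₀ = (C ++ [w]) ++ v :: D := by simpa using hCD.symm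
    have hl2 : (v :: D).getLast? = some w := by
      rw [← List.getLast?_append_of_ne_nil (C ++ [w]) (by simp : (v :: D : List V) ≠ []),
        ← hp₀, hlast, hwt]
    have hmem : w ∈ v :: D := by
      rw [List.getLast?_eq_getLast_of_ne_nil (by simp)] at hl2
      have h := Option.some_inj.mp hl2
      rw [← h]
      exact List.getLast_mem _
    have hno : w ∉ v :: D := by
      have h := (List.nodup_append'.mp (hp₀ ▸ hnd)).2.2
      exact fun hm => h (by simp) hm
    exact hno hmem
  have hxt : x ≠ t := hnt x hxv
  have hyt : y ≠ t := hnt y hyv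
  -- main path through u, x, v
  obtain ⟨p, hp, A, B, hAB⟩ := hedge u x hux
  obtain ⟨hch, hnd, hhead, hlast⟩ := hp
  have hpAB' : p = A ++ u :: x :: B := by simpa using hAB.symm
  have hBne : B ≠ [] := by
    intro hB
    rw [hpAB', hB, show A ++ [u, x] = (A ++ [u]) ++ [x] by simp,
      List.getLast?_append_of_ne_nil _ (by simp : ([x] : List V) ≠ [])] at hlast
    simp at hlast
    exact hxt hlast
  obtain ⟨b, B', rfl⟩ := List.exists_cons_of_ne_nil hBne
  have hbv : b = v := by
    apply houx
    have h : [x, b].Chain' E := hch.infix ⟨A ++ [u], B', by simp [hpAB']⟩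
    simpa [List.Chain', List.isChain_pair] using h
  rw [hbv] at hpAB'
  clear hAB hBne hbv
  have hpAB : p = A ++ u :: x :: v :: B' := hpAB'
  clear hpAB'
  -- y does not occur on p
  have hyp : y ∉ p := by
    intro hy
    obtain ⟨C, D, hCD⟩ := List.append_of_mem hy
    rcases D with _ | ⟨z, D'⟩
    · rw [hCD, List.getLast?_concat] at hlast
      simp at hlast
      exact hyt hlast
    · have hzv : z = v := by
        apply houy
        have h : [y, z].Chain' E := hch.infix ⟨C, D', by simp [hCD]⟩
        simpa [List.Chain', List.isChain_pair] using h
      rw [hzv] at hCD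
      have h1 : p = (C ++ [y]) ++ v :: D' := by simp [hCD]
      have h2 : p = (A ++ [u, x]) ++ v :: B' := by simp [hpAB]
      have heq := aux_split_unique hnd h1 h2
      have hx : (C ++ [y]).getLast? = (A ++ [u, x]).getLast? := by rw [heq]
      rw [List.getLast?_concat, show A ++ [u, x] = (A ++ [u]) ++ [x] by simp,
        List.getLast?_concat] at hx
      simp at hx
      exact hxy hx.symm
  -- the swapped path q
  set q : List V := A ++ u :: y :: v :: B' with hq
  have hyA : y ∉ A := fun h => hyp (by rw [hpAB]; simp [h])
  have hyu : y ≠ u := fun h => hyp (by rw [hpAB]; simp [h])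
  have hyv2 : y ≠ v := fun h => hyp (by rw [hpAB]; simp [h])
  have hyB : y ∉ B' := fun h => hyp (by rw [hpAB]; simp [h])
  have hqch : q.Chain' E := by
    rw [hpAB] at hch
    rw [hq]
    simp only [List.Chain', List.isChain_append_cons_cons] at hch ⊢
    obtain ⟨h1, _, h3⟩ := hch
    rw [List.isChain_cons_cons] at h3 ⊢
    exact ⟨h1, huy, hyv, h3.2⟩
  have hqnd : q.Nodup := by
    rw [hpAB] at hnd
    rw [hq]
    simp only [List.nodup_append', List.nodup_cons, List.mem_cons, List.mem_append,
      List.Disjoint] at hnd ⊢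
    obtain ⟨hA, ⟨hu, ⟨hx1, hv1, hB⟩⟩, hdisj⟩ := hnd
    refine ⟨hA, ⟨?_, ⟨?_, hv1, hB⟩⟩, ?_⟩
    · push_neg at hu ⊢
      exact ⟨fun h => hyu h.symm, hu.2.1, hu.2.2⟩
    · push_neg
      exact ⟨hyv2, hyB⟩
    · intro a ha hm
      rcases hm with h | h | h | h
      · exact hdisj ha (Or.inl h)
      · exact hyA (h ▸ ha)
      · exact hdisj ha (Or.inr (Or.inr (Or.inl h)))
      · exact hdisj ha (Or.inr (Or.inr (Or.inr h)))
  have hqhead : q.head? = some s := by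
    rw [hpAB] at hhead
    rw [hq, show A ++ u :: y :: v :: B' = (A ++ [u]) ++ y :: v :: B' by simp,
      List.head?_append_of_ne_nil _ (by simp)]
    rw [show A ++ u :: x :: v :: B' = (A ++ [u]) ++ x :: v :: B' by simp,
      List.head?_append_of_ne_nil _ (by simp)] at hhead
    exact hhead
  have hqlast : q.getLast? = some t := by
    rw [hpAB] at hlast
    rw [hq, show A ++ u :: y :: v :: B' = (A ++ [u, y]) ++ v :: B' by simp,
      List.getLast?_append_of_ne_nil _ (by simp : (v :: B' : List V) ≠ [])]
    rw [show A ++ u :: x :: v :: B' = (A ++ [u, x]) ++ v :: B' by simp,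
      List.getLast?_append_of_ne_nil _ (by simp : (v :: B' : List V) ≠ [])] at hlast
    exact hlast
  -- same intersection with T
  have hsame : p.toFinset ∩ T = q.toFinset ∩ T := by
    ext a
    simp only [Finset.mem_inter, List.mem_toFinset, hpAB, hq, List.mem_append, List.mem_cons]
    constructor
    · rintro ⟨hm, hT⟩
      have hax : a ≠ x := fun h => hxT (h ▸ hT)
      exact ⟨by tauto, hT⟩
    · rintro ⟨hm, hT⟩
      have hay : a ≠ y := fun h => hyT (h ▸ hT)
      exact ⟨by tauto, hT⟩
  have heq := htrack p q ⟨hch, hnd, hhead, hlast⟩ ⟨hqch, hqnd, hqhead, hqlast⟩ hsame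
  rw [hpAB, hq] at heq
  have heq2 := List.append_cancel_left heq
  simp only [List.cons.injEq] at heq2
  exact hxy heq2.2.1
end

section
/- Let G be a finite directed acyclic graph with source s and sink t, and let T be a tracking set for G. If u and w are vertices such that some directed s-t path passes through u and then later through w, and there are two internally disjoint (from T) directed u-w paths Q₁ and Q₂ with V(Q₁) ∩ T = V(Q₂) ∩ T = ∅ (as internal vertices) and {u,w} ∩ T = ∅, then Q₁ = Q₂. -/
private lemma transGen_of_chain'_cons {V : Type*} {E : V → V → Prop} :
    ∀ {b : List V} {x y : V}, (x :: b).Chain' E → y ∈ b → Relation.TransGen E x y := by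
  intro b
  induction b with
  | nil => intro x y _ hy; simp at hy
  | cons z b' ih =>
    intro x y h hy
    replace h := List.isChain_cons_cons.mp h
    rcases List.mem_cons.mp hy with rfl | hy'
    · exact Relation.TransGen.single h.1
    · exact Relation.TransGen.head h.1 (ih h.2 hy')

private lemma transGen_of_chain'_append {V : Type*} {E : V → V → Prop}
    {a b : List V} {x y : V} (h : (a ++ x :: b).Chain' E) (hy : y ∈ b) :
    Relation.TransGen E x y :=
  transGen_of_chain'_cons (List.isChain_append.mp h).2.1 hy

private lemma transGen_of_before {V : Type*} {E : V → V → Prop}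
    {l a b : List V} {x y : V} (h : l.Chain' E) (hl : l = a ++ x :: b) (hy : y ∈ b) :
    Relation.TransGen E x y := by
  subst hl; exact transGen_of_chain'_append h hy

/-- Key construction: replacing the `u ... w` segment of an `s`-`t` path by `Q`. -/
private lemma splice {V : Type*} [DecidableEq V]
    (E : V → V → Prop) (s t : V) (hacyc : DiAcyclic E)
    (T : Finset V) (u w : V)
    (pre mid suf p : List V) (hp : DiPath E s t p)
    (hpe : p = pre ++ u :: (mid ++ w :: suf))
    (Q : List V)
    (hQ : Q.Chain' E ∧ Q.Nodup ∧ Q.head? = some u ∧ Q.getLast? = some w ∧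
      ∀ v ∈ Q, v ∉ T) :
    DiPath E s t (pre ++ Q ++ suf) ∧
      (pre ++ Q ++ suf).toFinset ∩ T = (pre.toFinset ∪ suf.toFinset) ∩ T := by
  obtain ⟨hQc, hQn, hQh, hQl, hQT⟩ := hQ
  obtain ⟨hpc, hpn, hph, hpl⟩ := hp
  -- Q = u :: Qt
  obtain ⟨Qt, rfl⟩ : ∃ Qt, Q = u :: Qt := by
    cases Q with
    | nil => simp at hQh
    | cons a l => exact ⟨l, by simpa using congrArg (fun o => o.getD a) hQh⟩
  set Q := u :: Qt with hQdef
  have hQne : Q ≠ [] := by simp [hQdef]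
  -- Q = Qi ++ [w]
  obtain ⟨Qi, hQiw⟩ : ∃ Qi, Q = Qi ++ [w] := by
    refine ⟨Q.dropLast, ?_⟩
    have h1 := List.dropLast_append_getLast hQne
    have h2 : Q.getLast hQne = w := by
      have := List.getLast?_eq_getLast hQne
      rw [this] at hQl; exact Option.some_injective _ hQl
    rw [h2] at h1; exact h1.symm
  have hwQ : w ∈ Q := by rw [hQiw]; simp
  -- facts from nodup of p
  rw [hpe] at hpn hpc hph hpl
  have hnod := List.nodup_append'.mp hpn
  have hpreN : pre.Nodup := hnod.1
  have hconsN := hnod.2.1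
  have hdisj : pre.Disjoint (u :: (mid ++ w :: suf)) := hnod.2.2
  have huPre : u ∉ pre := fun h => hdisj h (by simp)
  have hsufN : suf.Nodup := by
    have := List.nodup_cons.mp hconsN
    have := List.nodup_append.mp this.2
    have := List.nodup_cons.mp this.2.1
    exact this.2
  have hwSuf : w ∉ suf := by
    have := List.nodup_cons.mp hconsN
    have := List.nodup_append.mp this.2
    exact (List.nodup_cons.mp this.2.1).1
  -- strict reachability facts from p
  have hbefore_u : ∀ v ∈ pre, Relation.TransGen E v u := by
    intro v hv
    obtain ⟨a, b, hab⟩ := List.mem_iff_append.mp hv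
    exact transGen_of_before hpc (a := a) (b := b ++ u :: (mid ++ w :: suf))
      (by rw [hab]; simp) (by simp)
  have hafter_w : ∀ v ∈ suf, Relation.TransGen E w v := by
    intro v hv
    exact transGen_of_before hpc
      (show pre ++ u :: (mid ++ w :: suf) = (pre ++ u :: mid) ++ w :: suf by simp) hv
  -- strict reachability facts from Q
  have hQafter_u : ∀ v ∈ Qt, Relation.TransGen E u v := fun v hv =>
    transGen_of_chain'_cons hQc hv
  have hQbefore_w : ∀ v ∈ Q, v ≠ w → Relation.TransGen E v w := by
    intro v hv hvw
    have hvQi : v ∈ Qi := by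
      rw [hQiw] at hv
      rcases List.mem_append.mp hv with h | h
      · exact h
      · simp at h; exact absurd h hvw
    obtain ⟨a, b, hab⟩ := List.mem_iff_append.mp hvQi
    refine transGen_of_before hQc (l := Q) (a := a) (b := b ++ [w]) ?_ (by simp)
    rw [hQiw, hab]; simp
  -- disjointness of pre and Q
  have hpreQ : pre.Disjoint Q := by
    intro v hvp hvQ
    rcases List.mem_cons.mp hvQ with rfl | hvQt
    · exact huPre hvp
    · exact hacyc v ((hbefore_u v hvp).trans (hQafter_u v hvQt))
  -- disjointness of Q and suf
  have hQsuf : Q.Disjoint suf := by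
    intro v hvQ hvs
    rcases eq_or_ne v w with rfl | hvw
    · exact hwSuf hvs
    · exact hacyc v ((hQbefore_w v hvQ hvw).trans (hafter_w v hvs))
  have hpresuf : pre.Disjoint suf := by
    intro v hvp hvs
    exact hdisj hvp (by simp [hvs])
  -- edge from pre's last to u, from w to suf's head
  have hchain := List.isChain_append.mp hpc
  have hedge_pre_u : ∀ x ∈ pre.getLast?, E x u := by
    intro x hx
    exact hchain.2.2 x hx u (by simp)
  have hchain2 := List.isChain_append.mp
    (show ((mid ++ w :: suf)).Chain' E from (List.isChain_cons.mp hchain.2.1).2)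
  have hedge_w_suf : ∀ y ∈ suf.head?, E w y := by
    intro y hy
    exact (List.isChain_cons.mp hchain2.2.1).1 y hy
  -- chain of the new path
  have hPc : (pre ++ Q ++ suf).Chain' E := by
    show List.IsChain E _; rw [List.append_assoc, List.isChain_append]
    refine ⟨hchain.1, ?_, ?_⟩
    · rw [List.isChain_append]
      refine ⟨hQc, hchain2.2.1.tail, ?_⟩
      intro x hx y hy
      rw [hQl] at hx
      simp at hx; subst hx
      cases suf with
      | nil => simp at hy
      | cons a l => simp at hy; subst hy; exact hedge_w_suf a (by simp)
    · intro x hx y hy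
      rw [List.head?_append, hQh] at hy
      simp at hy; subst hy
      exact hedge_pre_u x hx
  -- nodup of the new path
  have hPn : (pre ++ Q ++ suf).Nodup := by
    rw [List.append_assoc, List.nodup_append']
    refine ⟨hpreN, ?_, ?_⟩
    · rw [List.nodup_append']
      exact ⟨hQn, hsufN, hQsuf⟩
    · intro v hvp hv
      rcases List.mem_append.mp hv with h | h
      · exact hpreQ hvp h
      · exact hpresuf hvp h
  -- head
  have hPh : (pre ++ Q ++ suf).head? = some s := by
    rw [List.append_assoc, List.head?_append, List.head?_append, hQh]
    rw [List.head?_append] at hph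
    cases h : pre.head? <;> rw [h] at hph <;> simpa using hph
  -- last
  have hPl : (pre ++ Q ++ suf).getLast? = some t := by
    rw [List.getLast?_append]
    have hpl' : (w :: suf).getLast? = some t := by
      rw [show pre ++ u :: (mid ++ w :: suf) = (pre ++ u :: mid) ++ w :: suf by simp,
        List.getLast?_append] at hpl
      cases h : (w :: suf).getLast? with
      | none => simp at h
      | some a => rw [h] at hpl; simpa using hpl
    cases suf with
    | nil =>
      simp at hpl' ⊢
      rw [hQl, hpl']
    | cons a l =>
      rw [List.getLast?_cons_cons] at hpl'
      rw [hpl']; rfl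
  refine ⟨⟨hPc, hPn, hPh, hPl⟩, ?_⟩
  ext x
  simp only [List.toFinset_append, Finset.mem_inter, Finset.mem_union, List.mem_toFinset]
  constructor
  · rintro ⟨h1, h2⟩
    rcases h1 with (h | h) | h
    · exact ⟨Or.inl h, h2⟩
    · exact absurd h2 (hQT x h)
    · exact ⟨Or.inr h, h2⟩
  · rintro ⟨h1, h2⟩
    rcases h1 with h | h
    · exact ⟨Or.inl (Or.inl h), h2⟩
    · exact ⟨Or.inr h, h2⟩

/-- if some directed `s`-`t` path passes through `u` and later through `w`,
`u, w ∉ T`, and `Q₁`, `Q₂` are directed `u`-`w` paths avoiding `T`, then `Q₁ = Q₂`. -/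
theorem unique_uw_path_avoiding_trackers {V : Type*} [Fintype V] [DecidableEq V]
    (E : V → V → Prop) (s t : V)
    (hacyc : DiAcyclic E)
    (hsrc : ∀ v : V, ¬ E v s) (hsink : ∀ v : V, ¬ E t v)
    (T : Finset V) (hT : Tracking E s t T)
    (u w : V) (hu : u ∉ T) (hw : w ∉ T)
    (hthrough : ∃ p pre mid suf : List V,
      DiPath E s t p ∧ p = pre ++ u :: (mid ++ w :: suf))
    (Q₁ Q₂ : List V)
    (hQ₁ : Q₁.Chain' E ∧ Q₁.Nodup ∧ Q₁.head? = some u ∧ Q₁.getLast? = some w ∧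
      ∀ v ∈ Q₁, v ∉ T)
    (hQ₂ : Q₂.Chain' E ∧ Q₂.Nodup ∧ Q₂.head? = some u ∧ Q₂.getLast? = some w ∧
      ∀ v ∈ Q₂, v ∉ T) :
    Q₁ = Q₂ := by
  obtain ⟨p, pre, mid, suf, hp, hpe⟩ := hthrough
  obtain ⟨hP1, hT1⟩ := splice E s t hacyc T u w pre mid suf p hp hpe Q₁ hQ₁
  obtain ⟨hP2, hT2⟩ := splice E s t hacyc T u w pre mid suf p hp hpe Q₂ hQ₂
  have heq := hT _ _ hP1 hP2 (hT1.trans hT2.symm)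
  rw [List.append_assoc, List.append_assoc] at heq
  have := List.append_cancel_left heq
  exact List.append_cancel_right this
end
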